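/- arXiv:1804.04680 — 2 statements merged into one kernel-verified Lean document; each statement's English description precedes it below -/
import Mathlib

section
/- Let a and d be positive integers such that a does not divide 2d. Let G : ℂ → M₂(ℝ) be a C^∞ function taking symmetric matrix values and satisfying G(e^{iaθ}z) = R(dθ)·G(z)·R(dθ)ᵀ for all θ ∈ ℝ and z ∈ ℂ. Then there exists a C^∞ function ψ : ℝ → ℝ such that G(z) = ψ(|z|²)·Id for all z ∈ ℂ; in particular G(z)₁₂ = 0 and G(z)₁₁ = G(z)₂₂ for all z. -/
open Matrix

/-- The 2×2 rotation matrix `R(θ)`. -/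
noncomputable def rotMat (θ : ℝ) : Matrix (Fin 2) (Fin 2) ℝ :=
  !![Real.cos θ, -Real.sin θ; Real.sin θ, Real.cos θ]

open MeasureTheory intervalIntegral Metric Filter Topology


/-- If a sequence of functions is a chain of derivatives, the first is smooth. -/
lemma contDiff_of_chain (D : ℕ → ℝ → ℝ) (h : ∀ j x, HasDerivAt (D j) (D (j+1) x) x) :
    ContDiff ℝ (⊤ : ℕ∞) (D 0) := by
  suffices H : ∀ n : ℕ, ∀ j, ContDiff ℝ (n : ℕ∞) (D j) by
    exact contDiff_infty.2 fun n => H n 0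
  intro n
  induction n with
  | zero =>
    intro j
    have : Continuous (D j) :=
      continuous_iff_continuousAt.2 fun x => (h j x).differentiableAt.continuousAt
    exact_mod_cast contDiff_zero.2 this
  | succ n ih =>
    intro j
    have : ContDiff ℝ ((n : ℕ∞) + 1) (D j) := by
      rw [contDiff_succ_iff_deriv]
      refine ⟨fun x => (h j x).differentiableAt, by simp, ?_⟩
      have : deriv (D j) = D (j+1) := funext fun x => (h j x).deriv
      rw [this]; exact ih (j+1)
    exact this.of_le (by norm_cast)

noncomputable def paraInt (k : ℕ) (f : ℝ → ℝ) (x : ℝ) : ℝ :=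
  ∫ t in (0:ℝ)..1, t ^ k * f (t * x)

lemma paraInt_hasDerivAt (k : ℕ) (f : ℝ → ℝ) (hf : ContDiff ℝ (⊤ : ℕ∞) f) (x₀ : ℝ) :
    HasDerivAt (paraInt k f) (paraInt (k+1) (deriv f) x₀) x₀ := by
  have hdf : ContDiff ℝ (⊤ : ℕ∞) (deriv f) := (contDiff_infty_iff_deriv.mp hf).2
  obtain ⟨M, hM⟩ := (isCompact_Icc (a := -(|x₀|+1)) (b := |x₀|+1)).exists_bound_of_continuousOn
    (hdf.continuous.continuousOn)
  have key := intervalIntegral.hasDerivAt_integral_of_dominated_loc_of_deriv_le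
      (F := fun x t => t ^ k * f (t * x)) (F' := fun x t => t ^ k * (deriv f (t * x) * t))
      (x₀ := x₀) (a := 0) (b := 1) (μ := volume) (bound := fun _ => M) (s := Metric.ball x₀ 1) (Metric.ball_mem_nhds x₀ one_pos)
      ?_ ?_ ?_ ?_ ?_ ?_
  · rcases key with ⟨-, hd⟩
    have : (∫ t in (0:ℝ)..1, t ^ k * (deriv f (t * x₀) * t))
        = paraInt (k+1) (deriv f) x₀ := by
      unfold paraInt
      exact intervalIntegral.integral_congr fun t _ => by ring
    rwa [this] at hd
  · filter_upwards with x
    exact ((continuous_id.pow k).mul (hf.continuous.comp (continuous_id.mul continuous_const))).aestronglyMeasurable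
  · exact ((continuous_id.pow k).mul (hf.continuous.comp (continuous_id.mul continuous_const))).intervalIntegrable 0 1
  · exact ((continuous_id.pow k).mul ((hdf.continuous.comp (continuous_id.mul continuous_const)).mul continuous_id)).aestronglyMeasurable
  · filter_upwards with t ht x hx
    rw [Set.uIoc_of_le (by norm_num : (0:ℝ) ≤ 1)] at ht
    have ht0 : 0 < t := ht.1
    have ht1 : t ≤ 1 := ht.2
    have hxb : |x| ≤ |x₀| + 1 := by
      have := mem_ball_iff_norm.mp hx
      have : |x - x₀| < 1 := this
      calc |x| = |x₀ + (x - x₀)| := by ring_nf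
        _ ≤ |x₀| + |x - x₀| := abs_add_le _ _
        _ ≤ |x₀| + 1 := by linarith
    have htx : t * x ∈ Set.Icc (-(|x₀|+1)) (|x₀|+1) := by
      constructor
      · have : |t * x| ≤ |x₀| + 1 := by
          rw [abs_mul]
          calc |t| * |x| ≤ 1 * (|x₀|+1) := by
                apply mul_le_mul _ hxb (abs_nonneg _) (by norm_num)
                rw [abs_of_pos ht0]; exact ht1
            _ = |x₀| + 1 := one_mul _
        linarith [neg_abs_le (t*x), abs_le.mp this]
      · have : |t * x| ≤ |x₀| + 1 := by
          rw [abs_mul]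
          calc |t| * |x| ≤ 1 * (|x₀|+1) := by
                apply mul_le_mul _ hxb (abs_nonneg _) (by norm_num)
                rw [abs_of_pos ht0]; exact ht1
            _ = |x₀| + 1 := one_mul _
        linarith [abs_le.mp this]
    have hb := hM (t*x) htx
    have h1 : ‖t ^ k * (deriv f (t * x) * t)‖ = t^k * (‖deriv f (t*x)‖ * t) := by
      rw [norm_mul, norm_mul, norm_pow, Real.norm_eq_abs t, abs_of_pos ht0]
    rw [h1]
    have htk : t ^ k ≤ 1 := pow_le_one₀ ht0.le ht1
    have hMnn : (0:ℝ) ≤ M := le_trans (norm_nonneg _) hb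
    calc t^k * (‖deriv f (t*x)‖ * t) ≤ 1 * (M * 1) := by
          apply mul_le_mul htk _ (by positivity) (by norm_num)
          exact mul_le_mul hb ht1 ht0.le hMnn
      _ = M := by ring
  · exact intervalIntegrable_const
  · filter_upwards with t _ x _
    have h1 : HasDerivAt (fun x : ℝ => t * x) t x := by
      simpa using (hasDerivAt_id x).const_mul t
    have h1le : (1 : WithTop ℕ∞) ≤ ((⊤:ℕ∞) : WithTop ℕ∞) := by exact_mod_cast le_top
    have h2 : HasDerivAt f (deriv f (t*x)) (t*x) :=
      (hf.differentiable (by simp) (t*x)).hasDerivAt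
    exact ((h2.comp x h1).const_mul (t^k))

lemma iterate_deriv_contDiff {f : ℝ → ℝ} (hf : ContDiff ℝ (⊤ : ℕ∞) f) (j : ℕ) :
    ContDiff ℝ (⊤ : ℕ∞) (deriv^[j] f) := by
  induction j with
  | zero => exact hf
  | succ j ih => rw [Function.iterate_succ_apply']; exact (contDiff_infty_iff_deriv.mp ih).2

lemma paraInt_contDiff (k : ℕ) (f : ℝ → ℝ) (hf : ContDiff ℝ (⊤ : ℕ∞) f) :
    ContDiff ℝ (⊤ : ℕ∞) (paraInt k f) := by
  have := contDiff_of_chain (fun j => paraInt (k + j) (deriv^[j] f)) (fun j x => by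
    have h := paraInt_hasDerivAt (k + j) (deriv^[j] f) (iterate_deriv_contDiff hf j) x
    rw [show k + j + 1 = k + (j+1) by ring, show deriv (deriv^[j] f) = deriv^[j+1] f from
      (Function.iterate_succ_apply' deriv j f).symm] at h
    exact h)
  simpa using this

lemma oneletop : ((⊤:ℕ∞) : WithTop ℕ∞) ≠ 0 := by simp

lemma key_div (f d : ℝ → ℝ) (hcont : Continuous d) (hd : ∀ x, HasDerivAt f (d x) x)
    (hf0 : f 0 = 0) (x : ℝ) : f x = x * paraInt 0 d x := by
  rcases eq_or_ne x 0 with rfl | hx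
  · simp [hf0]
  · have h1 : paraInt 0 d x = ∫ t in (0:ℝ)..1, d (t * x) := by
      unfold paraInt
      exact intervalIntegral.integral_congr fun t _ => by ring
    have h2 : (∫ t in (0:ℝ)..1, d (t * x)) = x⁻¹ • ∫ u in (0*x)..(1*x), d u := by
      exact intervalIntegral.integral_comp_mul_right d hx
    have h3 : (∫ u in (0:ℝ)..x, d u) = f x - f 0 :=
      intervalIntegral.integral_eq_sub_of_hasDerivAt (fun u _ => hd u)
        (hcont.intervalIntegrable 0 x)
    rw [h1, h2]
    simp only [zero_mul, one_mul] at *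
    rw [h3, hf0, sub_zero, smul_eq_mul]
    field_simp

lemma deriv_of_even {h : ℝ → ℝ} (hsm : Differentiable ℝ h) (he : ∀ x, h (-x) = h x) (x : ℝ) :
    deriv h (-x) = -deriv h x := by
  have : (fun y => h (-y)) = h := funext he
  have h2 := deriv_comp_neg (f := h) (x := x)
  rw [this] at h2
  linarith [h2]

lemma deriv_of_odd {h : ℝ → ℝ} (hsm : Differentiable ℝ h) (ho : ∀ x, h (-x) = -h x) (x : ℝ) :
    deriv h (-x) = deriv h x := by
  have : (fun y => h (-y)) = fun y => -h y := funext ho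
  have h2 := deriv_comp_neg (f := h) (x := x)
  rw [this, deriv.fun_neg] at h2
  linarith [h2]

lemma evenDecomp (h : ℝ → ℝ) (hsm : ContDiff ℝ (⊤:ℕ∞) h) (he : ∀ x, h (-x) = h x) :
    ∃ g : ℝ → ℝ, ContDiff ℝ (⊤:ℕ∞) g ∧ (∀ x, g (-x) = g x) ∧ ∀ x, h x = h 0 + x^2 * g x := by
  have hdiff : Differentiable ℝ h := hsm.differentiable oneletop
  have hd1 : ContDiff ℝ (⊤:ℕ∞) (deriv h) := (contDiff_infty_iff_deriv.mp hsm).2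
  set u := paraInt 0 (deriv h) with hu
  have hu_eq : ∀ x, h x - h 0 = x * u x := by
    intro x
    exact key_div (fun y => h y - h 0) (deriv h) hd1.continuous
      (fun y => ((hdiff y).hasDerivAt).sub_const (h 0)) (by simp) x
  have husm : ContDiff ℝ (⊤:ℕ∞) u := paraInt_contDiff 0 (deriv h) hd1
  have huodd : ∀ x, u (-x) = -u x := by
    intro x
    unfold u; unfold paraInt
    rw [← intervalIntegral.integral_neg]
    refine intervalIntegral.integral_congr fun t _ => ?_
    have : deriv h (t * -x) = - deriv h (t * x) := by
      rw [show t * -x = -(t*x) by ring]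
      exact deriv_of_even hdiff he (t*x)
    rw [this]; ring
  have hu0 : u 0 = 0 := by have := huodd 0; simp at this; linarith
  have hud : ContDiff ℝ (⊤:ℕ∞) (deriv u) := (contDiff_infty_iff_deriv.mp husm).2
  set g := paraInt 0 (deriv u) with hg
  have hg_eq : ∀ x, u x = x * g x := fun x =>
    key_div u (deriv u) hud.continuous (fun y => (husm.differentiable oneletop y).hasDerivAt)
      hu0 x
  refine ⟨g, paraInt_contDiff 0 (deriv u) hud, ?_, ?_⟩
  · intro x
    unfold g; unfold paraInt
    refine intervalIntegral.integral_congr fun t _ => ?_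
    have : deriv u (t * -x) = deriv u (t * x) := by
      rw [show t * -x = -(t*x) by ring]
      exact deriv_of_odd (husm.differentiable oneletop) huodd (t*x)
    rw [this]
  · intro x
    linear_combination hu_eq x + x * hg_eq x


noncomputable section

def myBump : ContDiffBump (0:ℝ) := ⟨1, 2, one_pos, one_lt_two⟩

def mFun (i : ℕ) : ℝ → ℝ := fun u => u ^ i * myBump u

lemma mFun_contDiff (i : ℕ) : ContDiff ℝ (⊤:ℕ∞) (mFun i) :=
  (contDiff_id.pow i).mul myBump.contDiff

lemma mFun_compactSupport (i : ℕ) : HasCompactSupport (mFun i) :=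
  (myBump.hasCompactSupport).mul_left

lemma iteratedDeriv_compactSupport {f : ℝ → ℝ} (hf : HasCompactSupport f) (k : ℕ) :
    HasCompactSupport (iteratedDeriv k f) := by
  induction k with
  | zero => simpa using hf
  | succ k ih => rw [iteratedDeriv_succ]; exact ih.deriv

lemma natletop (k : ℕ) : ((k:ℕ∞) : WithTop ℕ∞) ≤ ((⊤:ℕ∞) : WithTop ℕ∞) := by
  exact_mod_cast le_top

lemma Mb_ex (i k : ℕ) : ∃ C : ℝ, ∀ x, ‖iteratedDeriv k (mFun i) x‖ ≤ C :=
  (((mFun_contDiff i).continuous_iteratedDeriv k (natletop k))).bounded_above_of_compact_support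
    (iteratedDeriv_compactSupport (mFun_compactSupport i) k)

def Mb (i k : ℕ) : ℝ := Classical.choose (Mb_ex i k)

lemma Mb_spec (i k : ℕ) : ∀ x, ‖iteratedDeriv k (mFun i) x‖ ≤ Mb i k :=
  Classical.choose_spec (Mb_ex i k)

lemma Mb_nonneg (i k : ℕ) : 0 ≤ Mb i k := le_trans (norm_nonneg _) (Mb_spec i k 0)

variable (b : ℕ → ℝ)

def Acoef (i : ℕ) : ℝ :=
  ∑ k ∈ Finset.range (i+1), |b i| / (Nat.factorial i) * Mb i k

lemma Acoef_nonneg (i : ℕ) : 0 ≤ Acoef b i :=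
  Finset.sum_nonneg fun k _ => mul_nonneg (div_nonneg (abs_nonneg _) (by positivity)) (Mb_nonneg i k)

def lam (i : ℕ) : ℝ := max 1 (2 ^ i * Acoef b i)

lemma lam_ge_one (i : ℕ) : 1 ≤ lam b i := le_max_left _ _
lemma lam_pos (i : ℕ) : 0 < lam b i := lt_of_lt_of_le one_pos (lam_ge_one b i)
lemma lam_ge (i : ℕ) : 2 ^ i * Acoef b i ≤ lam b i := le_max_right _ _

def ccoef (i : ℕ) : ℝ := b i / (Nat.factorial i * lam b i ^ i)

def term (i : ℕ) : ℝ → ℝ := fun x => ccoef b i * mFun i (lam b i * x)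

lemma term_contDiff (i : ℕ) : ContDiff ℝ (⊤:ℕ∞) (term b i) :=
  contDiff_const.mul ((mFun_contDiff i).comp (contDiff_const.mul contDiff_id))

lemma term_bound (k i : ℕ) (hki : k < i) (x : ℝ) :
    ‖iteratedFDeriv ℝ k (term b i) x‖ ≤ (1/2) ^ i := by
  rw [norm_iteratedFDeriv_eq_norm_iteratedDeriv]
  have hsm : ContDiff ℝ (k:ℕ∞) (fun u => ccoef b i * mFun i u) :=
    (contDiff_const.mul (mFun_contDiff i)).of_le (natletop k)
  have h1 : iteratedDeriv k (term b i)
      = fun x => (lam b i) ^ k * iteratedDeriv k (fun u => ccoef b i * mFun i u) (lam b i * x) :=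
    iteratedDeriv_comp_const_mul (by exact_mod_cast hsm) (lam b i)
  have h2 : ∀ y, ‖iteratedDeriv k (fun u => ccoef b i * mFun i u) y‖
      ≤ |ccoef b i| * Mb i k := by
    intro y
    have e : (fun u => ccoef b i * mFun i u) = ccoef b i • mFun i := by
      funext u; simp
    rw [e, ← norm_iteratedFDeriv_eq_norm_iteratedDeriv,
      iteratedFDeriv_const_smul_apply (((mFun_contDiff i).of_le (natletop k)).contDiffAt (x := y) :
        ContDiffAt ℝ ((k:ℕ) : WithTop ℕ∞) (mFun i) y),
      norm_smul (ccoef b i) (iteratedFDeriv ℝ k (mFun i) y),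
      norm_iteratedFDeriv_eq_norm_iteratedDeriv]
    exact mul_le_mul_of_nonneg_left (Mb_spec i k _) (norm_nonneg _)
  rw [h1]
  have hlam1 := lam_ge_one b i
  have hlampos := lam_pos b i
  set L := lam b i with hL
  set P := |b i| / (Nat.factorial i) * Mb i k with hP
  have hPnn : 0 ≤ P := mul_nonneg (by positivity) (Mb_nonneg i k)
  have hfactpos : (0:ℝ) < (Nat.factorial i : ℝ) := by
    exact_mod_cast Nat.factorial_pos i
  have step1 : ‖L ^ k * iteratedDeriv k (fun u => ccoef b i * mFun i u) (L * x)‖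
      ≤ L^k * (|ccoef b i| * Mb i k) := by
    rw [norm_mul, Real.norm_eq_abs, abs_pow, abs_of_pos hlampos]
    exact mul_le_mul_of_nonneg_left (h2 _) (by positivity)
  refine le_trans step1 ?_
  have hc : |ccoef b i| = |b i| / (Nat.factorial i * L ^ i) := by
    rw [ccoef, abs_div, abs_of_pos (show (0:ℝ) < (Nat.factorial i : ℝ) * lam b i ^ i by positivity)]
  rw [hc]
  have e1 : L^k * (|b i| / (Nat.factorial i * L^i) * Mb i k) = P * (L^k / L^i) := by
    rw [hP]; field_simp
  rw [e1]
  have e2 : L^k / L^i ≤ 1 / L := by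
    rw [div_le_div_iff₀ (by positivity) hlampos]
    calc L^k * L = L^(k+1) := by ring
      _ ≤ L^i := pow_le_pow_right₀ hlam1 hki
      _ = 1 * L^i := (one_mul _).symm
  have hPA : P ≤ Acoef b i := by
    refine Finset.single_le_sum (f := fun k => |b i| / (Nat.factorial i) * Mb i k)
      (fun j _ => mul_nonneg (by positivity) (Mb_nonneg i j)) (Finset.mem_range.2 ?_)
    omega
  calc P * (L^k / L^i) ≤ Acoef b i * (1/L) :=
        mul_le_mul hPA e2 (by positivity) (Acoef_nonneg b i)
    _ = Acoef b i / L := by rw [mul_one_div]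
    _ ≤ (1/2)^i := by
        rw [div_le_iff₀ hlampos]
        calc Acoef b i = (1/2)^i * (2^i * Acoef b i) := by
              rw [← mul_assoc, ← mul_pow]; norm_num
          _ ≤ (1/2)^i * L := mul_le_mul_of_nonneg_left (lam_ge b i) (by positivity)

/-- global bound for any k,i -/
lemma term_compactSupport (i : ℕ) : HasCompactSupport (term b i) := by
  have h0 : HasCompactSupport fun x : ℝ => mFun i (lam b i • x) :=
    (mFun_compactSupport i).comp_smul (ne_of_gt (lam_pos b i))
  have h1 : HasCompactSupport ((fun _ : ℝ => ccoef b i) * (fun x : ℝ => mFun i (lam b i • x))) :=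
    h0.mul_left
  have : term b i = (fun _ : ℝ => ccoef b i) * (fun x : ℝ => mFun i (lam b i • x)) := by
    funext x; simp [term, smul_eq_mul]
  rw [this]; exact h1

lemma Wb_ex (k i : ℕ) : ∃ C : ℝ, ∀ x, ‖iteratedDeriv k (term b i) x‖ ≤ C :=
  (((term_contDiff b i).continuous_iteratedDeriv k (natletop k))).bounded_above_of_compact_support
    (iteratedDeriv_compactSupport (term_compactSupport b i) k)

def Wb (k i : ℕ) : ℝ := Classical.choose (Wb_ex b k i)

lemma Wb_spec (k i : ℕ) : ∀ x, ‖iteratedDeriv k (term b i) x‖ ≤ Wb b k i :=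
  Classical.choose_spec (Wb_ex b k i)

def vb (k i : ℕ) : ℝ := (1/2)^i + if i ≤ k then |Wb b k i| else 0

lemma vb_summable (k : ℕ) : Summable (vb b k) := by
  apply Summable.add
  · exact summable_geometric_of_lt_one (by norm_num) (by norm_num)
  · apply summable_of_ne_finset_zero (s := Finset.range (k+1))
    intro i hi
    simp only [Finset.mem_range, not_lt] at hi
    rw [if_neg (by omega)]

lemma term_bound' (k i : ℕ) (x : ℝ) :
    ‖iteratedFDeriv ℝ k (term b i) x‖ ≤ vb b k i := by
  rcases lt_or_ge k i with h | h
  · refine le_trans (term_bound b k i h x) ?_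
    unfold vb
    have : (0:ℝ) ≤ if i ≤ k then |Wb b k i| else 0 := by positivity
    linarith
  · rw [norm_iteratedFDeriv_eq_norm_iteratedDeriv]
    refine le_trans (Wb_spec b k i x) ?_
    unfold vb
    rw [if_pos h]
    have : (0:ℝ) ≤ (1/2:ℝ)^i := by positivity
    calc Wb b k i ≤ |Wb b k i| := le_abs_self _
      _ ≤ (1/2)^i + |Wb b k i| := by linarith

def borelFn : ℝ → ℝ := fun x => ∑' i, term b i x

lemma borelFn_contDiff : ContDiff ℝ (⊤:ℕ∞) (borelFn b) := by
  refine contDiff_tsum_of_eventually (N := (⊤:ℕ∞)) (v := vb b)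
    (fun i => term_contDiff b i) (fun k _ => vb_summable b k) ?_
  intro k _
  exact Filter.Eventually.of_forall fun i => term_bound' b k i

lemma iteratedDeriv_monomial (C : ℝ) (i : ℕ) : ∀ k : ℕ,
    iteratedDeriv k (fun x : ℝ => C * x ^ i) = fun x => C * (i.descFactorial k : ℝ) * x ^ (i - k) := by
  intro k
  induction k with
  | zero => simp
  | succ k ih =>
    rw [iteratedDeriv_succ, ih]
    funext x
    rw [show (fun x : ℝ => C * (i.descFactorial k : ℝ) * x ^ (i - k))
        = fun x : ℝ => (C * (i.descFactorial k : ℝ)) * x ^ (i - k) from rfl]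
    rw [deriv_const_mul _ (differentiableAt_pow _), deriv_pow_field]
    rw [Nat.descFactorial_succ]
    push_cast
    rw [show i - k - 1 = i - (k+1) by omega]
    ring

lemma term_eventually_eq (i : ℕ) :
    term b i =ᶠ[nhds (0:ℝ)] fun x => (b i / Nat.factorial i) * x ^ i := by
  have hball : Metric.ball (0:ℝ) (1 / lam b i) ∈ nhds (0:ℝ) :=
    Metric.ball_mem_nhds 0 (div_pos one_pos (lam_pos b i))
  refine Filter.eventuallyEq_of_mem hball fun x hx => ?_
  have hx' : |x| < 1 / lam b i := by
    simpa [Real.norm_eq_abs] using mem_ball_iff_norm.mp hx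
  have hmem : lam b i * x ∈ Metric.closedBall (0:ℝ) myBump.rIn := by
    rw [Metric.mem_closedBall, dist_zero_right, Real.norm_eq_abs, abs_mul,
      abs_of_pos (lam_pos b i)]
    have : lam b i * |x| < lam b i * (1 / lam b i) :=
      mul_lt_mul_of_pos_left hx' (lam_pos b i)
    rw [mul_one_div, div_self (ne_of_gt (lam_pos b i))] at this
    have : lam b i * |x| ≤ 1 := le_of_lt this
    simpa [myBump] using this
  have hone := myBump.one_of_mem_closedBall hmem
  show term b i x = _
  rw [term, mFun, hone, mul_one, ccoef, mul_pow]
  have h1 : lam b i ^ i ≠ 0 := ne_of_gt (pow_pos (lam_pos b i) i)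
  have h2 : (Nat.factorial i : ℝ) ≠ 0 := by exact_mod_cast Nat.factorial_ne_zero i
  field_simp

lemma term_iteratedDeriv_zero (k i : ℕ) :
    iteratedDeriv k (term b i) 0 = if i = k then b k else 0 := by
  rw [Filter.EventuallyEq.iteratedDeriv_eq k (term_eventually_eq b i),
    iteratedDeriv_monomial]
  rcases eq_or_ne i k with rfl | h
  · have h2 : (Nat.factorial i : ℝ) ≠ 0 := by exact_mod_cast Nat.factorial_ne_zero i
    simp only [if_pos rfl, Nat.descFactorial_self, Nat.sub_self, pow_zero, mul_one]
    field_simp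
    simp
  · rw [if_neg h]
    rcases lt_or_gt_of_ne h with hlt | hgt
    · simp [Nat.descFactorial_eq_zero_iff_lt.2 hlt]
    · have : i - k ≠ 0 := by omega
      simp [zero_pow this]

lemma borelFn_iteratedDeriv_zero (k : ℕ) : iteratedDeriv k (borelFn b) 0 = b k := by
  have happly := iteratedFDeriv_tsum_apply (𝕜 := ℝ) (N := (⊤:ℕ∞)) (v := vb b)
    (fun i => term_contDiff b i) (fun k _ => vb_summable b k)
    (fun k i x _ => term_bound' b k i x) (k := k) le_top (0:ℝ)
  have hsum : Summable (fun i => iteratedFDeriv ℝ k (term b i) 0) := by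
    apply Summable.of_norm_bounded (vb_summable b k)
    intro i; exact term_bound' b k i 0
  have happ2 := (ContinuousMultilinearMap.apply ℝ (fun _ : Fin k => ℝ) ℝ
    (fun _ => (1:ℝ))).map_tsum hsum
  rw [iteratedDeriv_eq_iteratedFDeriv]
  unfold borelFn
  rw [happly]
  have : (ContinuousMultilinearMap.apply ℝ (fun _ : Fin k => ℝ) ℝ (fun _ => (1:ℝ)))
      (∑' i, iteratedFDeriv ℝ k (term b i) 0)
      = ∑' i, (iteratedFDeriv ℝ k (term b i) 0) (fun _ => (1:ℝ)) := by
    rw [happ2]; rfl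
  rw [show (∑' (n : ℕ), iteratedFDeriv ℝ k (term b n) 0) (fun _ => (1:ℝ))
      = (ContinuousMultilinearMap.apply ℝ (fun _ : Fin k => ℝ) ℝ (fun _ => (1:ℝ)))
        (∑' i, iteratedFDeriv ℝ k (term b i) 0) from rfl, this]
  have : ∀ i, (iteratedFDeriv ℝ k (term b i) 0) (fun _ => (1:ℝ))
      = if i = k then b k else 0 := by
    intro i
    rw [← iteratedDeriv_eq_iteratedFDeriv, term_iteratedDeriv_zero]
  rw [tsum_congr this, tsum_ite_eq]

-- end of noncomputable section
end


/-- The bundled data: a smooth even function. -/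
def SEF : Type := {f : ℝ → ℝ // ContDiff ℝ (⊤:ℕ∞) f ∧ ∀ x, f (-x) = f x}

noncomputable def stepg (f : SEF) : ℝ → ℝ := Classical.choose (evenDecomp f.1 f.2.1 f.2.2)

lemma stepg_spec (f : SEF) : ContDiff ℝ (⊤:ℕ∞) (stepg f) ∧ (∀ x, stepg f (-x) = stepg f x) ∧
    ∀ x, f.1 x = f.1 0 + x^2 * stepg f x := Classical.choose_spec (evenDecomp f.1 f.2.1 f.2.2)

noncomputable def stepSEF (f : SEF) : SEF := by
  refine ⟨fun x => stepg f x + x/2 * deriv (stepg f) x, ?_, ?_⟩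
  · have h1 := (stepg_spec f).1
    have h2 : ContDiff ℝ (⊤:ℕ∞) (deriv (stepg f)) := (contDiff_infty_iff_deriv.mp h1).2
    exact h1.add ((contDiff_id.div_const 2).mul h2)
  · intro x
    have h1 := (stepg_spec f).1
    have he := (stepg_spec f).2.1
    have hodd : deriv (stepg f) (-x) = -deriv (stepg f) x := by
      have : (fun y => stepg f (-y)) = stepg f := funext he
      have h2 := deriv_comp_neg (f := stepg f) (x := x)
      rw [this] at h2
      linarith
    show stepg f (-x) + (-x)/2 * deriv (stepg f) (-x) = stepg f x + x/2 * deriv (stepg f) x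
    rw [he, hodd]
    ring

noncomputable def eseq (h0 : SEF) : ℕ → SEF := fun n => stepSEF^[n] h0

lemma eseq_succ (h0 : SEF) (j : ℕ) : eseq h0 (j+1) = stepSEF (eseq h0 j) := by
  unfold eseq; rw [Function.iterate_succ_apply']

lemma eseq_deriv (h0 : SEF) (j : ℕ) (x : ℝ) :
    HasDerivAt (eseq h0 j).1 (2 * x * (eseq h0 (j+1)).1 x) x := by
  set f := eseq h0 j
  have hg := stepg_spec f
  have hfe : f.1 = fun y => f.1 0 + y^2 * stepg f y := funext hg.2.2
  have hgd : DifferentiableAt ℝ (stepg f) x := (hg.1.differentiable oneletop) x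
  have H : HasDerivAt (fun y => f.1 0 + y^2 * stepg f y)
      (0 + ((2:ℕ) * x^(2-1) * stepg f x + x^2 * deriv (stepg f) x)) x := by
    exact (hasDerivAt_const x (f.1 0)).add (((hasDerivAt_pow 2 x)).mul hgd.hasDerivAt)
  rw [← hfe] at H
  have : (0 + ((2:ℕ) * x^(2-1) * stepg f x + x^2 * deriv (stepg f) x))
      = 2 * x * (stepg f x + x/2 * deriv (stepg f) x) := by push_cast; ring
  rw [this] at H
  have : (eseq h0 (j+1)).1 x = stepg f x + x/2 * deriv (stepg f) x := by
    rw [eseq_succ]; rfl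
  rw [this]
  exact H

lemma eseq_next_zero (h0 : SEF) (j : ℕ) : (eseq h0 (j+1)).1 0 = stepg (eseq h0 j) 0 := by
  rw [eseq_succ]
  show stepg (eseq h0 j) 0 + 0/2 * deriv (stepg (eseq h0 j)) 0 = _
  ring

/-- Main 1D lemma: an even smooth function is a smooth function of x². -/
theorem even_comp_sq (h : ℝ → ℝ) (hsm : ContDiff ℝ (⊤:ℕ∞) h) (he : ∀ x, h (-x) = h x) :
    ∃ ψ : ℝ → ℝ, ContDiff ℝ (⊤:ℕ∞) ψ ∧ ∀ x, h x = ψ (x^2) := by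
  set h0 : SEF := ⟨h, hsm, he⟩ with hh0
  set e : ℕ → ℝ → ℝ := fun j => (eseq h0 j).1 with he'
  set b : ℕ → ℝ := fun j => e j 0 with hb
  set β : ℝ → ℝ := borelFn b with hβ
  set B : ℕ → ℝ → ℝ := fun j => deriv^[j] β with hB
  have hBsm : ∀ j, ContDiff ℝ (⊤:ℕ∞) (B j) := fun j =>
    iterate_deriv_contDiff (borelFn_contDiff b) j
  have hBd : ∀ j x, HasDerivAt (B j) (B (j+1) x) x := by
    intro j x
    have : B (j+1) = deriv (B j) := by
      show deriv^[j+1] β = _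
      rw [Function.iterate_succ_apply']
    rw [this]
    exact ((hBsm j).differentiable oneletop x).hasDerivAt
  have hB0 : ∀ j, B j 0 = e j 0 := by
    intro j
    have := borelFn_iteratedDeriv_zero b j
    rw [iteratedDeriv_eq_iterate] at this
    exact this
  set Φ : ℕ → ℝ → ℝ := fun j s => if 0 < s then e j (Real.sqrt s) - B j s else 0 with hΦ
  have hesm : ∀ j, ContDiff ℝ (⊤:ℕ∞) (e j) := fun j => (eseq h0 j).2.1
  -- derivative chain for Φ
  have hchain : ∀ j s, HasDerivAt (Φ j) (Φ (j+1) s) s := by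
    intro j s
    rcases lt_trichotomy s 0 with hneg | rfl | hpos
    · have hev : Φ j =ᶠ[𝓝 s] fun _ => 0 := by
        filter_upwards [Iio_mem_nhds hneg] with t ht
        exact if_neg (by simp at ht; linarith)
      have : HasDerivAt (fun _ : ℝ => (0:ℝ)) 0 s := hasDerivAt_const s 0
      have h2 := this.congr_of_eventuallyEq hev
      have : Φ (j+1) s = 0 := if_neg (by linarith)
      rwa [this]
    · -- s = 0
      have hΦ0 : Φ j 0 = 0 := if_neg (lt_irrefl 0)
      have hval : Φ (j+1) 0 = 0 := if_neg (lt_irrefl 0)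
      rw [hval, hasDerivAt_iff_tendsto_slope]
      have hsplit : 𝓝[≠] (0:ℝ) = 𝓝[<] 0 ⊔ 𝓝[>] 0 := (nhdsLT_sup_nhdsGT 0).symm
      rw [hsplit, tendsto_sup]
      constructor
      · -- left filter: slope is 0
        apply Tendsto.congr' (f₁ := fun _ => (0:ℝ))
        · filter_upwards [self_mem_nhdsWithin] with t ht
          have ht' : t < 0 := ht
          rw [slope_def_field, hΦ0]
          have : Φ j t = 0 := if_neg (by linarith)
          rw [this]; simp
        · exact tendsto_const_nhds
      · -- right filter
        set g := stepg (eseq h0 j) with hg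
        have hgsp := stepg_spec (eseq h0 j)
        have hlim1 : Tendsto (fun x => g (Real.sqrt x)) (𝓝[>] (0:ℝ)) (𝓝 (g 0)) := by
          have hc : Continuous fun x => g (Real.sqrt x) :=
            (hgsp.1.continuous).comp Real.continuous_sqrt
          have := hc.tendsto 0
          rw [Real.sqrt_zero] at this
          exact this.mono_left nhdsWithin_le_nhds
        have hlim2 : Tendsto (slope (B j) 0) (𝓝[>] (0:ℝ)) (𝓝 (B (j+1) 0)) := by
          have := hasDerivAt_iff_tendsto_slope.mp (hBd j 0)
          exact this.mono_left (nhdsWithin_mono 0 fun x hx => ne_of_gt hx)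
        have hkey : Tendsto (fun x => g (Real.sqrt x) - slope (B j) 0 x) (𝓝[>] (0:ℝ))
            (𝓝 (g 0 - B (j+1) 0)) := hlim1.sub hlim2
        have hzero : g 0 - B (j+1) 0 = 0 := by
          have h1 : B (j+1) 0 = e (j+1) 0 := hB0 (j+1)
          have h2 : e (j+1) 0 = stepg (eseq h0 j) 0 := eseq_next_zero h0 j
          rw [h1, h2]
          exact sub_self _
        rw [hzero] at hkey
        apply Tendsto.congr' (f₁ := fun x => g (Real.sqrt x) - slope (B j) 0 x) _ hkey
        filter_upwards [self_mem_nhdsWithin] with t ht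
        have ht' : (0:ℝ) < t := ht
        rw [slope_def_field, slope_def_field, hΦ0]
        have hΦt : Φ j t = e j (Real.sqrt t) - B j t := if_pos ht'
        have hejt : e j (Real.sqrt t) = e j 0 + t * g (Real.sqrt t) := by
          have := hgsp.2.2 (Real.sqrt t)
          rw [Real.sq_sqrt (le_of_lt ht')] at this
          exact this
        rw [hΦt, hejt, hB0 j]
        simp only [sub_zero]
        rw [eq_div_iff (ne_of_gt ht'), sub_mul, div_mul_cancel₀ _ (ne_of_gt ht')]
        ring
    · -- s > 0
      have hsq : Real.sqrt s ≠ 0 := ne_of_gt (Real.sqrt_pos.mpr hpos)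
      have hder : HasDerivAt (fun t => e j (Real.sqrt t) - B j t)
          (e (j+1) (Real.sqrt s) - B (j+1) s) s := by
        have h1 : HasDerivAt Real.sqrt (1/(2*Real.sqrt s)) s := Real.hasDerivAt_sqrt (ne_of_gt hpos)
        have h2 : HasDerivAt (e j) (2 * Real.sqrt s * e (j+1) (Real.sqrt s)) (Real.sqrt s) :=
          eseq_deriv h0 j (Real.sqrt s)
        have h3 := h2.comp s h1
        have : 2 * Real.sqrt s * e (j+1) (Real.sqrt s) * (1/(2*Real.sqrt s))
            = e (j+1) (Real.sqrt s) := by field_simp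
        rw [this] at h3
        exact h3.sub (hBd j s)
      have hev : (fun t => e j (Real.sqrt t) - B j t) =ᶠ[𝓝 s] Φ j := by
        filter_upwards [Ioi_mem_nhds hpos] with t ht
        exact (if_pos ht).symm
      have h4 := hder.congr_of_eventuallyEq hev.symm
      have : Φ (j+1) s = e (j+1) (Real.sqrt s) - B (j+1) s := if_pos hpos
      rwa [this]
  have hΦsm : ContDiff ℝ (⊤:ℕ∞) (Φ 0) := contDiff_of_chain Φ hchain
  refine ⟨fun s => Φ 0 s + β s, hΦsm.add (borelFn_contDiff b), ?_⟩
  intro x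
  rcases eq_or_ne x 0 with rfl | hx
  · have h1 : Φ 0 (0^2 : ℝ) = 0 := by norm_num [hΦ]
    have h2 : β ((0:ℝ)^2) = e 0 0 := by
      have := hB0 0
      rw [show ((0:ℝ)^2) = 0 by norm_num]; exact this
    show h 0 = Φ 0 (0^2:ℝ) + β ((0:ℝ)^2)
    rw [h1, h2]
    simp [he']
    rfl
  · have hx2 : (0:ℝ) < x^2 := by positivity
    have h1 : Φ 0 (x^2) = e 0 (Real.sqrt (x^2)) - B 0 (x^2) := if_pos hx2
    have h2 : B 0 = β := rfl
    show h x = Φ 0 (x^2) + β (x^2)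
    rw [h1, h2, sub_add_cancel, Real.sqrt_sq_eq_abs]
    have he0 : e 0 = h := rfl
    rw [he0]
    rcases abs_choice x with habs | habs
    · rw [habs]
    · rw [habs, he x]


lemma rotMat_mul_transpose (θ : ℝ) : rotMat θ * (rotMat θ)ᵀ = 1 := by
  have pyth := Real.sin_sq_add_cos_sq θ
  ext i j
  fin_cases i <;> fin_cases j <;>
    simp [rotMat, Matrix.mul_apply, Fin.sum_univ_two, Matrix.vecHead, Matrix.vecTail,
      Matrix.one_apply] <;> nlinarith [pyth]

lemma scalar_of_conj_inv (A : Matrix (Fin 2) (Fin 2) ℝ) (φ : ℝ)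
    (h : A = rotMat φ * A * (rotMat φ)ᵀ)
    (hsym : A 1 0 = A 0 1) (hs : Real.sin φ ≠ 0) : A 0 1 = 0 ∧ A 0 0 = A 1 1 := by
  have h00 := congrFun (congrFun h 0) 0
  have h01 := congrFun (congrFun h 0) 1
  simp [rotMat, Matrix.mul_apply, Matrix.vecMul, dotProduct, Fin.sum_univ_two,
    Matrix.vecHead, Matrix.vecTail] at h00 h01
  rw [hsym] at h00 h01
  have pyth := Real.sin_sq_add_cos_sq φ
  set c := Real.cos φ
  set s := Real.sin φ
  set p := A 0 0
  set q := A 0 1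
  set r := A 1 1
  have eq1 : s^2*(p - r) + 2*c*s*q = 0 := by linear_combination h00 + p * pyth
  have eq2 : 2*s^2*q - c*s*(p - r) = 0 := by linear_combination h01 + q * pyth
  have key : 2*s*q*(s^2+c^2) = 0 := by linear_combination c * eq1 + s * eq2
  rw [pyth, mul_one] at key
  have hq : q = 0 := by
    have h2s : (2:ℝ) * s ≠ 0 := mul_ne_zero two_ne_zero hs
    rcases mul_eq_zero.mp key with h' | h'
    · exact absurd h' h2s
    · exact h'
  refine ⟨hq, ?_⟩
  rw [hq] at eq1
  have hs2 : s^2 ≠ 0 := pow_ne_zero 2 hs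
  have : p - r = 0 := by
    rcases mul_eq_zero.mp (by linarith [eq1] : s^2 * (p - r) = 0) with h' | h'
    · exact absurd h' hs2
    · exact h'
  linarith

theorem equivariant_symmetric_matrix_is_even_multiple_of_id
    (a d : ℕ) (ha : 0 < a) (hd : 0 < d) (hndvd : ¬ a ∣ 2 * d)
    (G : ℂ → Matrix (Fin 2) (Fin 2) ℝ)
    (hsmooth : ∀ i j : Fin 2, ContDiff ℝ (⊤ : ℕ∞) fun z => G z i j)
    (hsymm : ∀ z : ℂ, (G z).IsSymm)
    (hequiv : ∀ (θ : ℝ) (z : ℂ),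
      G (Complex.exp ((a * θ : ℝ) * Complex.I) * z) =
        rotMat (d * θ) * G z * (rotMat (d * θ))ᵀ) :
    ∃ ψ : ℝ → ℝ, ContDiff ℝ (⊤ : ℕ∞) ψ ∧
      ∀ z : ℂ, G z = ψ (‖z‖ ^ 2) • (1 : Matrix (Fin 2) (Fin 2) ℝ) := by
  have haR : (a:ℝ) ≠ 0 := Nat.cast_ne_zero.mpr (Nat.pos_iff_ne_zero.mp ha)
  have hπ := Real.pi_ne_zero
  -- sin of the special angle is nonzero
  set φ : ℝ := (d:ℝ) * (2 * Real.pi / (a:ℝ)) with hφ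
  have hsφ : Real.sin φ ≠ 0 := by
    intro hzero
    obtain ⟨n, hn⟩ := Real.sin_eq_zero_iff.mp hzero
    have hcast : ((n * a : ℤ) : ℝ) * Real.pi = ((2 * d : ℕ) : ℝ) * Real.pi := by
      have h5 : ((n:ℝ) * Real.pi) * a = ((d:ℝ) * (2*Real.pi/(a:ℝ))) * a := by rw [hn]
      rw [mul_assoc (d:ℝ), div_mul_cancel₀ _ haR] at h5
      push_cast
      linear_combination h5
    have h2 : ((n * a : ℤ) : ℝ) = ((2 * d : ℕ) : ℝ) := mul_right_cancel₀ hπ hcast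
    have h3 : (n * a : ℤ) = ((2 * d : ℕ) : ℤ) := by exact_mod_cast h2
    have h4 : (a : ℤ) ∣ ((2 * d : ℕ) : ℤ) := ⟨n, by linarith [h3]⟩
    exact hndvd (Int.natCast_dvd_natCast.mp h4)
  -- symmetry in usable form
  have hsym' : ∀ z, G z 1 0 = G z 0 1 := by
    intro z
    have := hsymm z
    rw [Matrix.IsSymm] at this
    have := congrFun (congrFun this 0) 1
    simpa [Matrix.transpose_apply] using this
  -- each G z is scalar
  have hscalar : ∀ z, G z 0 1 = 0 ∧ G z 0 0 = G z 1 1 := by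
    intro z
    have h := hequiv (2 * Real.pi / (a:ℝ)) z
    have harg : ((a : ℝ) * (2 * Real.pi / (a:ℝ)) : ℝ) = 2 * Real.pi := by field_simp
    rw [harg] at h
    have hexp : Complex.exp (((2 * Real.pi : ℝ) : ℂ) * Complex.I) = 1 := by
      push_cast
      exact Complex.exp_two_pi_mul_I
    rw [hexp, one_mul] at h
    exact scalar_of_conj_inv (G z) φ (by rw [← hφ] at h; exact h) (hsym' z) hsφ
  have hGscalar : ∀ z, G z = G z 0 0 • (1 : Matrix (Fin 2) (Fin 2) ℝ) := by
    intro z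
    obtain ⟨hq, hpr⟩ := hscalar z
    ext i j
    fin_cases i <;> fin_cases j <;>
      simp [Matrix.smul_apply, Matrix.one_apply, hq, hsym' z, hpr.symm]
  -- rotation invariance of the scalar
  have grot : ∀ (s : ℝ) (z : ℂ),
      G (Complex.exp ((s:ℝ) * Complex.I) * z) 0 0 = G z 0 0 := by
    intro s z
    have h := hequiv (s / a) z
    have harg : ((a : ℝ) * (s / (a:ℝ)) : ℝ) = s := by field_simp
    rw [harg] at h
    rw [hGscalar z] at h
    rw [Matrix.mul_smul, Matrix.smul_mul, Matrix.mul_one, rotMat_mul_transpose] at h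
    rw [h]
    simp [Matrix.smul_apply, Matrix.one_apply]
  -- reduce to a real even function
  set g : ℂ → ℝ := fun z => G z 0 0 with hg
  set hfun : ℝ → ℝ := fun x => g ((x : ℝ) : ℂ) with hhfun
  have hfsm : ContDiff ℝ (⊤:ℕ∞) hfun := (hsmooth 0 0).comp Complex.ofRealCLM.contDiff
  have hfeven : ∀ x, hfun (-x) = hfun x := by
    intro x
    show g (((-x : ℝ) : ℂ)) = g ((x:ℝ) : ℂ)
    have : ((-x : ℝ) : ℂ) = Complex.exp ((Real.pi : ℝ) * Complex.I) * ((x:ℝ):ℂ) := by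
      rw [Complex.exp_pi_mul_I]
      push_cast
      ring
    rw [this]
    exact grot Real.pi ((x:ℝ):ℂ)
  obtain ⟨ψ, hψsm, hψ⟩ := even_comp_sq hfun hfsm hfeven
  refine ⟨ψ, hψsm, fun z => ?_⟩
  have habs : g z = hfun ‖z‖ := by
    show g z = g ((‖z‖ : ℝ) : ℂ)
    conv_lhs => rw [← Complex.norm_mul_exp_arg_mul_I z]
    rw [mul_comm]
    exact grot (Complex.arg z) _
  rw [hGscalar z, show G z 0 0 = g z from rfl, habs, hψ ‖z‖]
end

section
/- Let a and d be positive integers with a dividing d, and set q = d/a. Let B(θ) be the 4×4 block-diagonal matrix diag(R(aθ), R(dθ)). Let G : ℂ \ {0} → M₄(ℝ) be a C^∞ function taking symmetric matrix values, satisfying G(e^{iaθ}z) = B(θ)·G(z)·B(θ)ᵀ for all θ ∈ ℝ and z ∈ ℂ \ {0}, and such that for all real t > 0: G(t)₁₁ = G(t)₂₂ = 1, G(t)₁₂ = 0, G(t)₁₃ = 0 and G(t)₁₄ = 0. If G extends to a C^∞ function on all of ℂ, then there exist C^∞ functions φ₁, φ₂ : ℝ → ℝ such that G(t)₂₃ =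 t^{q+1}·φ₁(t²) and G(t)₂₄ = t^{q+1}·φ₂(t²) for all real t > 0. -/
open Matrix
open scoped ContDiff

noncomputable section

namespace OV
open Complex intervalIntegral Real Set Filter Topology
open scoped ContDiff

lemma chain_hasDerivAt {gm : ℕ → ℝ → ℂ}
    (hd : ∀ m, ∀ t : ℝ, t ≠ 0 → HasDerivAt (gm m) (gm (m+1) t) t)
    (hc : ∀ m, ContinuousAt (gm m) 0) :
    ∀ m t, HasDerivAt (gm m) (gm (m+1) t) t := by
  intro m t
  rcases eq_or_ne t 0 with rfl | ht
  · exact hasDerivAt_of_hasDerivAt_of_ne (fun y hy => hd m y hy) (hc m) (hc (m+1))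
  · exact hd m t ht

lemma chain_contDiff {gm : ℕ → ℝ → ℂ}
    (hd : ∀ m, ∀ t : ℝ, t ≠ 0 → HasDerivAt (gm m) (gm (m+1) t) t)
    (hc : ∀ m, ContinuousAt (gm m) 0) :
    (∀ m, ContDiff ℝ ∞ (gm m)) ∧ (∀ m, deriv (gm m) = gm (m+1)) := by
  have H := chain_hasDerivAt hd hc
  have hder : ∀ m, deriv (gm m) = gm (m+1) := fun m => funext fun t => (H m t).deriv
  have key : ∀ (k : ℕ) (m : ℕ), ContDiff ℝ k (gm m) := by
    intro k
    induction k with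
    | zero =>
      intro m
      rw [show ((0:ℕ) : WithTop ℕ∞) = 0 from rfl, contDiff_zero]
      exact continuous_iff_continuousAt.2 fun t => (H m t).continuousAt
    | succ k ih =>
      intro m
      rw [show ((k+1:ℕ) : WithTop ℕ∞) = (k : WithTop ℕ∞) + 1 by push_cast; ring,
        contDiff_succ_iff_deriv]
      refine ⟨fun t => (H m t).differentiableAt, by simp, ?_⟩
      rw [hder m]; exact ih (m+1)
  exact ⟨fun m => contDiff_infty.2 fun k => key k m, hder⟩

lemma abs_le_abs_of_uIoc {t x : ℝ} (hx : x ∈ Set.uIoc 0 t) : |x| ≤ |t| := by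
  rcases Set.mem_uIoc.1 hx with h | h
  · have h1 : (0:ℝ) ≤ x := h.1.le
    have h2 : x ≤ t := h.2
    rw [_root_.abs_of_nonneg h1, _root_.abs_of_nonneg (h1.trans h2)]; exact h2
  · have h1 : x ≤ 0 := h.2
    have h2 : t < x := h.1
    rw [_root_.abs_of_nonpos h1, _root_.abs_of_nonpos (h2.le.trans h1)]; linarith

lemma hadamard (f : ℝ → ℂ) (hf : ContDiff ℝ ∞ f) (h0 : f 0 = 0) :
    ∃ g : ℝ → ℂ, ContDiff ℝ ∞ g ∧ (∀ t : ℝ, f t = t * g t) ∧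
      (∀ m, iteratedDeriv m g 0 = iteratedDeriv (m+1) f 0 / (m+1)) := by
  set F : ℕ → ℝ → ℂ := fun m => deriv^[m] f with hF
  have hFc : ∀ m, ContDiff ℝ ∞ (F m) := fun m => hf.iterate_deriv m
  have hFcont : ∀ m, Continuous (F m) := fun m => (hFc m).continuous
  have hFd : ∀ m t, HasDerivAt (F m) (F (m+1) t) t := by
    intro m t
    have h1 : DifferentiableAt ℝ (F m) t :=
      ((contDiff_infty_iff_deriv.1 (hFc m)).1).differentiableAt
    have := h1.hasDerivAt
    rwa [show deriv (F m) t = F (m+1) t from by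
      simp only [hF, Function.iterate_succ_apply']] at this
  set φ : ℕ → ℝ → ℂ := fun k s => (s:ℂ)^k * F (k+1) s with hφ
  have hφcont : ∀ k, Continuous (φ k) := by
    intro k
    exact (Complex.continuous_ofReal.pow k).mul (hFcont (k+1))
  set I : ℕ → ℝ → ℂ := fun k t => ∫ s in (0:ℝ)..t, φ k s with hI
  have hId : ∀ k t, HasDerivAt (I k) (φ k t) t := by
    intro k t
    exact intervalIntegral.integral_hasDerivAt_right
      ((hφcont k).intervalIntegrable _ _)
      ((hφcont k).stronglyMeasurableAtFilter _ _)
      (hφcont k).continuousAt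
  have hI0 : ∀ k, I k 0 = 0 := fun k => intervalIntegral.integral_same
  have parts : ∀ k t, I (k+1) t = (t:ℂ)^(k+1) * F (k+1) t - (k+1) * I k t := by
    intro k t
    set D : ℝ → ℂ := fun t => (t:ℂ)^(k+1) * F (k+1) t - (k+1) * I k t - I (k+1) t with hD
    have hDd : ∀ x : ℝ, HasDerivAt D 0 x := by
      intro x
      have hpow : HasDerivAt (fun y : ℝ => ((y:ℂ))^(k+1)) (((k:ℂ)+1) * (x:ℂ)^k) x := by
        have := (hasDerivAt_pow (k+1) ((x:ℝ):ℂ)).comp_ofReal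
        simpa using this
      have h1 : HasDerivAt (fun y : ℝ => ((y:ℂ))^(k+1) * F (k+1) y)
          (((k:ℂ)+1) * (x:ℂ)^k * F (k+1) x + (x:ℂ)^(k+1) * F (k+2) x) x :=
        hpow.mul (hFd (k+1) x)
      have h2 : HasDerivAt (fun y => ((k:ℂ)+1) * I k y) (((k:ℂ)+1) * φ k x) x :=
        (hId k x).const_mul _
      have h3 := (h1.sub h2).sub (hId (k+1) x)
      have : ((k:ℂ)+1) * (x:ℂ)^k * F (k+1) x + (x:ℂ)^(k+1) * F (k+2) x
          - ((k:ℂ)+1) * φ k x - φ (k+1) x = 0 := by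
        simp only [hφ]; push_cast; ring
      rwa [this] at h3
    have hconst : D t = D 0 :=
      is_const_of_deriv_eq_zero (fun x => (hDd x).differentiableAt) (fun x => (hDd x).deriv) t 0
    have hD0 : D 0 = 0 := by simp [hD, hI0]
    have := hconst.trans hD0
    simp only [hD, sub_eq_zero] at this
    linear_combination -this
  set g : ℕ → ℝ → ℂ := fun m t => if t = 0 then F (m+1) 0 / (m+1) else I m t / (t:ℂ)^(m+1)
    with hg
  have hgne : ∀ m (t : ℝ), t ≠ 0 → g m t = I m t / (t:ℂ)^(m+1) := by
    intro m t ht; simp [hg, ht]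
  have hgd : ∀ m, ∀ t : ℝ, t ≠ 0 → HasDerivAt (g m) (g (m+1) t) t := by
    intro m t ht
    have htc : ((t:ℝ):ℂ) ≠ 0 := Complex.ofReal_ne_zero.2 ht
    have hpow : HasDerivAt (fun y : ℝ => ((y:ℂ))^(m+1)) (((m:ℂ)+1) * (t:ℂ)^m) t := by
      have := (hasDerivAt_pow (m+1) ((t:ℝ):ℂ)).comp_ofReal
      simpa using this
    have hq : HasDerivAt (fun y : ℝ => I m y / (y:ℂ)^(m+1))
        ((φ m t * (t:ℂ)^(m+1) - I m t * (((m:ℂ)+1) * (t:ℂ)^m)) / ((t:ℂ)^(m+1))^2) t :=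
      (hId m t).div hpow (pow_ne_zero _ htc)
    have hval : (φ m t * (t:ℂ)^(m+1) - I m t * (((m:ℂ)+1) * (t:ℂ)^m)) / ((t:ℂ)^(m+1))^2
        = g (m+1) t := by
      rw [hgne (m+1) t ht, parts m t]
      simp only [hφ]
      rw [div_eq_div_iff (pow_ne_zero 2 (pow_ne_zero _ htc)) (pow_ne_zero _ htc)]
      push_cast
      ring
    rw [hval] at hq
    apply hq.congr_of_eventuallyEq
    filter_upwards [eventually_ne_nhds ht] with y hy
    exact hgne m y hy
  have hgc : ∀ m, ContinuousAt (g m) 0 := by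
    intro m
    have hm1 : ((m:ℂ)+1) ≠ 0 := Nat.cast_add_one_ne_zero m
    rw [Metric.continuousAt_iff]
    intro ε hε
    obtain ⟨δ, hδ, hδ'⟩ := Metric.continuousAt_iff.1 ((hFcont (m+1)).continuousAt (x := 0))
      (ε/2) (by linarith)
    refine ⟨δ, hδ, ?_⟩
    intro x hx
    rcases eq_or_ne x 0 with rfl | hx0
    · simpa using hε
    · have hxc : ((x:ℝ):ℂ) ≠ 0 := Complex.ofReal_ne_zero.2 hx0
      have hg0 : g m 0 = F (m+1) 0 / ((m:ℂ)+1) := by norm_num [hg]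
      have hmono : (∫ s in (0:ℝ)..x, ((s:ℂ))^m) = (x:ℂ)^(m+1)/((m:ℂ)+1) := by
        have h1 : (∫ s in (0:ℝ)..x, ((s:ℂ))^m) = ((∫ s in (0:ℝ)..x, s^m : ℝ) : ℂ) := by
          rw [← intervalIntegral.integral_ofReal]
          congr 1; ext s; push_cast; ring
        rw [h1, integral_pow]
        push_cast
        try ring
      have hrepr : (∫ s in (0:ℝ)..x, (s:ℂ)^m * (F (m+1) s - F (m+1) 0))
          = I m x - (∫ s in (0:ℝ)..x, ((s:ℂ))^m) * F (m+1) 0 := by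
        rw [← intervalIntegral.integral_mul_const,
          ← intervalIntegral.integral_sub ((hφcont m).intervalIntegrable _ _)
            ((show Continuous (fun s : ℝ => (s:ℂ)^m * F (m+1) 0) from
              (Complex.continuous_ofReal.pow m).mul continuous_const).intervalIntegrable _ _)]
        congr 1; ext s; simp only [hφ]; ring
      have hsplit : g m x - g m 0
          = (∫ s in (0:ℝ)..x, (s:ℂ)^m * (F (m+1) s - F (m+1) 0)) / (x:ℂ)^(m+1) := by
        rw [hgne m x hx0, hg0, hrepr, hmono, sub_div]
        congr 1
        rw [div_mul_eq_mul_div, div_div, mul_comm ((m:ℂ)+1) _,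
          mul_div_mul_left _ _ (pow_ne_zero _ hxc)]
      have hbound : ‖(∫ s in (0:ℝ)..x, (s:ℂ)^m * (F (m+1) s - F (m+1) 0))‖
          ≤ |x|^m * (ε/2) * |x - 0| := by
        apply intervalIntegral.norm_integral_le_of_norm_le_const
        intro y hy
        have h1 : |y| ≤ |x| := abs_le_abs_of_uIoc hy
        have h2 : dist y 0 < δ := by
          rw [Real.dist_eq, sub_zero]
          exact lt_of_le_of_lt h1 (by rwa [Real.dist_eq, sub_zero] at hx)
        have h3 := hδ' h2
        rw [norm_mul]
        have h4 : ‖((y:ℝ):ℂ)^m‖ ≤ |x|^m := by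
          rw [norm_pow, Complex.norm_real, Real.norm_eq_abs]
          exact pow_le_pow_left₀ (abs_nonneg _) h1 m
        have h5 : ‖F (m+1) y - F (m+1) 0‖ ≤ ε/2 := by
          rw [dist_eq_norm] at h3; exact h3.le
        exact mul_le_mul h4 h5 (norm_nonneg _) (pow_nonneg (abs_nonneg _) m)
      rw [dist_eq_norm, hsplit, norm_div]
      have hden : ‖((x:ℝ):ℂ)^(m+1)‖ = |x|^(m+1) := by
        rw [norm_pow, Complex.norm_real, Real.norm_eq_abs]
      rw [hden]
      have hxpos : (0:ℝ) < |x|^(m+1) := pow_pos (abs_pos.2 hx0) _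
      rw [div_lt_iff₀ hxpos]
      calc ‖(∫ s in (0:ℝ)..x, (s:ℂ)^m * (F (m+1) s - F (m+1) 0))‖
          ≤ |x|^m * (ε/2) * |x - 0| := hbound
        _ = (ε/2) * |x|^(m+1) := by rw [sub_zero, pow_succ]; ring
        _ < ε * |x|^(m+1) := by
            apply mul_lt_mul_of_pos_right _ hxpos; linarith
  obtain ⟨hsm, hder⟩ := chain_contDiff hgd hgc
  have hiter : ∀ m, deriv^[m] (g 0) = g m := by
    intro m
    induction m with
    | zero => rfl
    | succ m ih => rw [Function.iterate_succ_apply', ih, hder]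
  refine ⟨g 0, hsm 0, ?_, ?_⟩
  · intro t
    rcases eq_or_ne t 0 with rfl | ht
    · simpa using h0
    · rw [hgne 0 t ht]
      have hI0t : I 0 t = f t := by
        have h7 : (∫ s in (0:ℝ)..t, deriv f s) = f t - f 0 :=
          intervalIntegral.integral_deriv_eq_sub
            (fun x _ => (contDiff_infty_iff_deriv.1 hf).1 x)
            ((hFcont 1).intervalIntegrable _ _)
        rw [h0, sub_zero] at h7
        rw [← h7]
        apply intervalIntegral.integral_congr
        intro s _
        simp [hφ, hF]
      rw [hI0t]
      have htc : ((t:ℝ):ℂ) ≠ 0 := Complex.ofReal_ne_zero.2 ht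
      field_simp
      ring
  · intro m
    rw [iteratedDeriv_eq_iterate, hiter m, iteratedDeriv_eq_iterate]
    norm_num [hg]
    simp [hF, Function.iterate_succ_apply]

lemma iter_deriv_smul_const {g : ℝ → ℝ} (hg : ContDiff ℝ ∞ g) (c : ℂ) :
    ∀ k, deriv^[k] (fun x => g x • c) = fun x => deriv^[k] g x • c := by
  intro k
  induction k with
  | zero => rfl
  | succ k ih =>
    rw [Function.iterate_succ_apply', Function.iterate_succ_apply', ih]
    funext x
    exact deriv_smul_const
      (((hg.iterate_deriv k).differentiable (by simp)).differentiableAt) c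

lemma iter_deriv_pow (m : ℕ) :
    ∀ k, deriv^[k] (fun u : ℝ => u^m) = fun u => (m.descFactorial k : ℝ) * u^(m-k) := by
  intro k
  induction k with
  | zero => funext u; simp
  | succ k ih =>
    rw [Function.iterate_succ_apply', ih]
    funext u
    rw [deriv_const_mul _ (differentiableAt_pow _), deriv_pow_field,
      Nat.descFactorial_succ, Nat.sub_sub]
    push_cast
    ring

lemma iter_deriv_comp_const_mul {h : ℝ → ℝ} (hh : ContDiff ℝ ∞ h) (lam : ℝ) (k : ℕ) :
    deriv^[k] (fun u => h (lam * u)) = fun u => lam^k * deriv^[k] h (lam * u) := by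
  have h1 := iteratedDeriv_comp_const_mul (n := k) (hh.of_le (m := (k : WithTop ℕ∞)) (by exact_mod_cast (le_top : ((k:ℕ∞)) ≤ ⊤))) lam
  rw [iteratedDeriv_eq_iterate] at h1
  rw [h1]
  funext u
  rw [iteratedDeriv_eq_iterate]

lemma bump_bound (ρ : ℝ → ℝ) (hρ : ContDiff ℝ ∞ ρ) (hsupp : HasCompactSupport ρ) (k : ℕ) :
    ∃ C : ℝ, 0 ≤ C ∧ ∀ u, |deriv^[k] ρ u| ≤ C := by
  have h1 : Continuous fun u => ‖iteratedFDeriv ℝ k ρ u‖ :=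
    (hρ.continuous_iteratedFDeriv (by exact_mod_cast (le_top : ((k:ℕ∞)) ≤ ⊤))).norm
  have h2 : HasCompactSupport fun u => ‖iteratedFDeriv ℝ k ρ u‖ :=
    (hsupp.iteratedFDeriv k).norm
  obtain ⟨C, hC⟩ := h1.bounded_above_of_compact_support h2
  refine ⟨max C 0, le_max_right _ _, ?_⟩
  intro u
  have h3 : |deriv^[k] ρ u| = ‖iteratedFDeriv ℝ k ρ u‖ := by
    rw [← iteratedDeriv_eq_iterate, ← Real.norm_eq_abs,
      norm_iteratedFDeriv_eq_norm_iteratedDeriv]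
  rw [h3]
  exact le_trans ((le_abs_self _).trans (by simpa using hC u)) (le_max_left _ _)

lemma borel_jet (L : ℕ → ℂ) :
    ∃ b : ℝ → ℂ, ContDiff ℝ ∞ b ∧ ∀ m, deriv^[m] b 0 = L m := by
  classical
  set χb : ContDiffBump (0:ℝ) := ⟨1, 2, one_pos, one_lt_two⟩ with hχb
  set χ : ℝ → ℝ := fun x => χb x with hχdef
  have hχ : ContDiff ℝ ∞ χ := χb.contDiff
  have hχs : HasCompactSupport χ := χb.hasCompactSupport
  set ρ : ℕ → ℝ → ℝ := fun m => (fun w : ℝ => w^m) * χ with hρdef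
  have hρapp : ∀ m w, ρ m w = w^m * χ w := fun m w => rfl
  have hρc : ∀ m, ContDiff ℝ ∞ (ρ m) := fun m => (contDiff_id.pow m).mul hχ
  have hρs : ∀ m, HasCompactSupport (ρ m) := fun m => hχs.mul_left
  have hB : ∀ m k, ∃ C, 0 ≤ C ∧ ∀ u, |deriv^[k] (ρ m) u| ≤ C :=
    fun m k => bump_bound (ρ m) (hρc m) (hρs m) k
  choose B hB0 hBb using hB
  set E : ℕ → ℕ → ℝ := fun k m => B m k * (‖L m‖ / m.factorial) with hE
  have hE0 : ∀ k m, 0 ≤ E k m := fun k m =>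
    mul_nonneg (hB0 m k) (div_nonneg (norm_nonneg _) (Nat.cast_nonneg _))
  set S : ℕ → ℝ := fun m => 1 + ∑ k ∈ Finset.range (m+1), E k m with hS
  have hS1 : ∀ m, 1 ≤ S m := fun m =>
    le_add_of_nonneg_right (Finset.sum_nonneg fun k _ => hE0 k m)
  have hS0 : ∀ m, 0 < S m := fun m => lt_of_lt_of_le one_pos (hS1 m)
  have hSE : ∀ k m, k ≤ m → E k m ≤ S m := by
    intro k m hk
    refine le_trans ?_ (le_add_of_nonneg_left zero_le_one)
    exact Finset.single_le_sum (fun i _ => hE0 i m)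
      (Finset.mem_range.2 (Nat.lt_succ_of_le hk))
  set lam : ℕ → ℝ := fun m => max 1 (2^m * S m) with hlam
  have hlam1 : ∀ m, 1 ≤ lam m := fun m => le_max_left _ _
  have hlam0 : ∀ m, 0 < lam m := fun m => lt_of_lt_of_le one_pos (hlam1 m)
  have hlam2 : ∀ m, 2^m * S m ≤ lam m := fun m => le_max_right _ _
  set c : ℕ → ℂ := fun m => L m / (m.factorial : ℂ) / ((lam m : ℝ) : ℂ)^m with hc
  set f : ℕ → ℝ → ℂ := fun m u => ρ m (lam m * u) • c m with hf
  have hfc : ∀ m, ContDiff ℝ ∞ (f m) := by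
    intro m
    exact ((hρc m).comp ((contDiff_const).mul contDiff_id)).smul contDiff_const
  have hfk : ∀ m k, deriv^[k] (f m)
      = fun u => ((lam m)^k * deriv^[k] (ρ m) (lam m * u)) • c m := by
    intro m k
    have hg : ContDiff ℝ ∞ (fun u => ρ m (lam m * u)) :=
      (hρc m).comp ((contDiff_const).mul contDiff_id)
    rw [show f m = fun u => (fun v => ρ m (lam m * v)) u • c m from rfl,
      iter_deriv_smul_const hg (c m) k, iter_deriv_comp_const_mul (hρc m) (lam m) k]
  have hcnorm : ∀ m, ‖c m‖ = ‖L m‖ / m.factorial / (lam m)^m := by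
    intro m
    rw [hc]
    rw [norm_div, norm_div, norm_pow, Complex.norm_real, Real.norm_eq_abs,
      _root_.abs_of_pos (hlam0 m)]
    norm_num
  set v : ℕ → ℕ → ℝ := fun k m => E k m * (lam m)^k / (lam m)^m with hv
  have hbound : ∀ (k : ℕ) (m : ℕ) (x : ℝ), ‖iteratedFDeriv ℝ k (f m) x‖ ≤ v k m := by
    intro k m x
    rw [norm_iteratedFDeriv_eq_norm_iteratedDeriv, iteratedDeriv_eq_iterate, hfk m k]
    simp only [norm_smul, Real.norm_eq_abs]
    rw [hcnorm m, abs_mul, _root_.abs_of_pos (pow_pos (hlam0 m) k)]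
    rw [hv, hE]
    have h1 : |deriv^[k] (ρ m) (lam m * x)| ≤ B m k := hBb m k _
    have h2 : (0:ℝ) < (lam m)^m := pow_pos (hlam0 m) m
    have h3 : (0:ℝ) ≤ ‖L m‖ / m.factorial := div_nonneg (norm_nonneg _) (Nat.cast_nonneg _)
    calc (lam m)^k * |deriv^[k] (ρ m) (lam m * x)| * (‖L m‖ / ↑m.factorial / lam m ^ m)
        ≤ (lam m)^k * B m k * (‖L m‖ / ↑m.factorial / lam m ^ m) := by
          apply mul_le_mul_of_nonneg_right
          · exact mul_le_mul_of_nonneg_left h1 (le_of_lt (pow_pos (hlam0 m) k))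
          · exact div_nonneg h3 h2.le
      _ = B m k * (‖L m‖ / ↑m.factorial) * lam m ^ k / lam m ^ m := by
          field_simp
  have hv0 : ∀ k m, 0 ≤ v k m := fun k m =>
    div_nonneg (mul_nonneg (hE0 k m) (pow_nonneg (hlam0 m).le k)) (pow_nonneg (hlam0 m).le m)
  have key : ∀ k m, k < m → v k m ≤ (1/2)^m := by
    intro k m hm
    have h2 : (0:ℝ) < (lam m)^m := pow_pos (hlam0 m) m
    have h4 : (lam m)^(k+1) ≤ (lam m)^m := pow_le_pow_right₀ (hlam1 m) hm
    have h5 : v k m ≤ E k m / lam m := by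
      rw [hv, div_le_div_iff₀ h2 (hlam0 m)]
      calc E k m * lam m ^ k * lam m = E k m * lam m ^ (k+1) := by ring
        _ ≤ E k m * lam m ^ m := mul_le_mul_of_nonneg_left h4 (hE0 k m)
    refine h5.trans ?_
    rw [div_le_iff₀ (hlam0 m)]
    have h9 : S m = (1/2)^m * (2^m * S m) := by
      rw [← mul_assoc, ← mul_pow]
      norm_num
    calc E k m ≤ S m := hSE k m hm.le
      _ = (1/2)^m * (2^m * S m) := h9
      _ ≤ (1/2)^m * lam m := by
          apply mul_le_mul_of_nonneg_left (hlam2 m)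
          positivity
  have hvsum : ∀ k : ℕ, Summable (v k) := by
    intro k
    rw [← summable_nat_add_iff (k+1)]
    refine Summable.of_nonneg_of_le (fun n => hv0 k _) (fun n => ?_)
      ((summable_geometric_of_lt_one (by norm_num) (by norm_num : (1/2:ℝ) < 1)).mul_right
        ((1/2)^(k+1)))
    calc v k (n+(k+1)) ≤ (1/2)^(n+(k+1)) := key k _ (by omega)
      _ = (1/2)^n * (1/2)^(k+1) := by rw [pow_add]
  -- assemble
  have hfc' : ∀ m, ContDiff ℝ ((⊤:ℕ∞) : WithTop ℕ∞) (f m) := fun m => by exact_mod_cast hfc m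
  have hb : ContDiff ℝ ((⊤:ℕ∞) : WithTop ℕ∞) (fun u => ∑' m, f m u) :=
    contDiff_tsum hfc' (fun k _ => hvsum k) (fun k m x _ => hbound k m x)
  have hρ0 : ∀ m k, deriv^[k] (ρ m) 0 = (m.descFactorial k : ℝ) * 0^(m-k) := by
    intro m k
    have hev : ρ m =ᶠ[𝓝 (0:ℝ)] fun w => w^m := by
      filter_upwards [Metric.ball_mem_nhds (0:ℝ) one_pos] with w hw
      have : χ w = 1 := χb.one_of_mem_closedBall (Metric.ball_subset_closedBall hw)
      rw [hρapp, this, mul_one]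
    have h1 := hev.iteratedDeriv_eq k
    rw [iteratedDeriv_eq_iterate, iteratedDeriv_eq_iterate] at h1
    rw [h1, iter_deriv_pow]
  have hfd0 : ∀ m k, deriv^[k] (f m) 0
      = (((lam m)^k * ((m.descFactorial k : ℝ) * 0^(m-k)))) • c m := by
    intro m k
    rw [hfk m k]
    simp only [mul_zero]
    rw [hρ0 m k]
  have hzero : ∀ (k m : ℕ), m ≠ k → iteratedFDeriv ℝ k (f m) 0 = 0 := by
    intro k m hmk
    have h1 : deriv^[k] (f m) 0 = 0 := by
      rw [hfd0 m k]
      rcases lt_or_gt_of_ne hmk with h | h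
      · rw [Nat.descFactorial_eq_zero_iff_lt.2 h]
        simp
      · rw [zero_pow (Nat.sub_ne_zero_of_lt h)]
        simp
    have h2 : ‖iteratedFDeriv ℝ k (f m) 0‖ = 0 := by
      rw [norm_iteratedFDeriv_eq_norm_iteratedDeriv, iteratedDeriv_eq_iterate, h1, norm_zero]
    exact norm_eq_zero.1 h2
  refine ⟨fun u => ∑' m, f m u, by exact_mod_cast hb, ?_⟩
  intro k
  have hith := iteratedFDeriv_tsum_apply (N := (⊤:ℕ∞)) hfc'
    (fun k _ => hvsum k) (fun k m x _ => hbound k m x) (k := k) le_top (0:ℝ)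
  have hsingle : (∑' m, iteratedFDeriv ℝ k (f m) 0) = iteratedFDeriv ℝ k (f k) 0 :=
    tsum_eq_single k (fun m hmk => hzero k m hmk)
  have hmapeq : iteratedFDeriv ℝ k (fun u => ∑' m, f m u) 0 = iteratedFDeriv ℝ k (f k) 0 := by
    rw [hith, hsingle]
  have happ : iteratedDeriv k (fun u => ∑' m, f m u) 0 = iteratedDeriv k (f k) 0 := by
    rw [iteratedDeriv_eq_iteratedFDeriv, iteratedDeriv_eq_iteratedFDeriv, hmapeq]
  rw [← iteratedDeriv_eq_iterate, happ, iteratedDeriv_eq_iterate, hfd0 k k]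
  rw [Nat.descFactorial_self, Nat.sub_self, pow_zero, mul_one]
  rw [hc, Complex.real_smul]
  push_cast
  have hfk0 : ((k.factorial : ℕ) : ℂ) ≠ 0 := Nat.cast_ne_zero.2 k.factorial_ne_zero
  have hlamk : (((lam k : ℝ)) : ℂ) ≠ 0 := Complex.ofReal_ne_zero.2 (hlam0 k).ne'
  have hB : (((lam k : ℝ)) : ℂ)^k * ((k.factorial : ℕ) : ℂ) ≠ 0 :=
    mul_ne_zero (pow_ne_zero _ hlamk) hfk0
  rw [div_div, mul_comm ((k.factorial : ℕ) : ℂ) ((((lam k : ℝ)) : ℂ)^k), ← mul_div_assoc]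
  exact mul_div_cancel_left₀ (L k) hB

lemma one_le_inf : (1 : WithTop ℕ∞) ≤ ∞ := by exact_mod_cast (le_top : (1:ℕ∞) ≤ ⊤)

lemma even_to_sq (e : ℝ → ℂ) (he : ContDiff ℝ ∞ e) (hev : ∀ t : ℝ, e (-t) = e t) :
    ∃ ψ : ℝ → ℂ, ContDiff ℝ ∞ ψ ∧ ∀ t : ℝ, 0 < t → e t = ψ (t^2) := by
  classical
  have step : ∀ g : ℝ → ℂ, (ContDiff ℝ ∞ g ∧ ∀ t : ℝ, g (-t) = g t) →
      ∃ g' : ℝ → ℂ, (ContDiff ℝ ∞ g' ∧ ∀ t : ℝ, g' (-t) = g' t) ∧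
        ∀ t : ℝ, deriv g t = t * g' t := by
    intro g hg
    have hdc : ContDiff ℝ ∞ (deriv g) := (contDiff_infty_iff_deriv.1 hg.1).2
    have hdiff : ∀ s : ℝ, HasDerivAt g (deriv g s) s :=
      fun s => ((hg.1.differentiable (by simp)) s).hasDerivAt
    have hodd : ∀ t : ℝ, deriv g (-t) = - deriv g t := by
      intro t
      have h3 : HasDerivAt (fun s : ℝ => g (-s)) ((-1:ℝ) • deriv g (-t)) t :=
        (hdiff (-t)).scomp t (hasDerivAt_neg t)
      have h4 : (fun s : ℝ => g (-s)) = g := funext hg.2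
      rw [h4] at h3
      have h5 := h3.deriv
      rw [neg_one_smul] at h5
      linear_combination h5
    have h00 : deriv g 0 = 0 := by
      have h6 := hodd 0
      rw [neg_zero] at h6
      have h7 : (2:ℂ) * deriv g 0 = 0 := by linear_combination h6
      exact (mul_eq_zero.1 h7).resolve_left two_ne_zero
    obtain ⟨g', hg'c, hgt, _⟩ := hadamard (deriv g) hdc h00
    refine ⟨g', ⟨hg'c, ?_⟩, hgt⟩
    intro t
    rcases eq_or_ne t 0 with rfl | ht
    · rw [neg_zero]
    · have h1 := hgt t
      have h2 := hgt (-t)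
      rw [hodd t, h1] at h2
      push_cast at h2
      have htc : ((t:ℝ):ℂ) ≠ 0 := Complex.ofReal_ne_zero.2 ht
      have h8 : ((t:ℝ):ℂ) * g' (-t) = ((t:ℝ):ℂ) * g' t := by linear_combination h2
      exact mul_left_cancel₀ htc h8
  -- iterate the step
  let T : {g : ℝ → ℂ // ContDiff ℝ ∞ g ∧ ∀ t : ℝ, g (-t) = g t} →
      {g : ℝ → ℂ // ContDiff ℝ ∞ g ∧ ∀ t : ℝ, g (-t) = g t} :=
    fun p => ⟨(step p.1 p.2).choose, (step p.1 p.2).choose_spec.1⟩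
  have hT : ∀ p, ∀ t : ℝ, deriv p.1 t = t * (T p).1 t := fun p => (step p.1 p.2).choose_spec.2
  set em : ℕ → ℝ → ℂ := fun m => (T^[m] ⟨e, he, hev⟩).1 with hem
  have hem0 : em 0 = e := rfl
  have hemsucc : ∀ m, ∀ t : ℝ, deriv (em m) t = t * em (m+1) t := by
    intro m t
    have h1 : T^[m+1] ⟨e, he, hev⟩ = T (T^[m] ⟨e, he, hev⟩) := Function.iterate_succ_apply' T m _
    rw [hem]
    simp only [h1]
    exact hT _ t
  have hemc : ∀ m, ContDiff ℝ ∞ (em m) := fun m => (T^[m] ⟨e, he, hev⟩).2.1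
  have hemd : ∀ m (s : ℝ), HasDerivAt (em m) ((s:ℂ) * em (m+1) s) s := by
    intro m s
    have h1 := (((hemc m).differentiable (by simp)) s).hasDerivAt
    rwa [hemsucc m s] at h1
  -- Borel jet correction
  obtain ⟨b, hbC, hbjet⟩ := borel_jet (fun m => (1/2:ℂ)^m * em m 0)
  have hbm : ∀ m, ContDiff ℝ ∞ (deriv^[m] b) := fun m => hbC.iterate_deriv m
  have hbmd : ∀ m u, HasDerivAt (deriv^[m] b) (deriv^[m+1] b u) u := by
    intro m u
    have h1 := (((hbm m).differentiable (by simp)) u).hasDerivAt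
    rwa [show deriv (deriv^[m] b) u = deriv^[m+1] b u from by
      rw [Function.iterate_succ_apply']] at h1
  -- the chain of glued functions
  set Fm : ℕ → ℝ → ℂ :=
    fun m u => if 0 < u then (1/2:ℂ)^m * em m (Real.sqrt u) - deriv^[m] b u else 0 with hFm
  have hauxc : ∀ m, Continuous (fun u => (1/2:ℂ)^m * em m (Real.sqrt u) - deriv^[m] b u) :=
    fun m => (continuous_const.mul ((hemc m).continuous.comp Real.continuous_sqrt)).sub
      (hbm m).continuous
  have haux0 : ∀ m, ((1/2:ℂ)^m * em m (Real.sqrt 0) - deriv^[m] b 0) = 0 := by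
    intro m
    rw [Real.sqrt_zero, hbjet m, sub_self]
  have hFmc0 : ∀ m, ContinuousAt (Fm m) 0 := by
    intro m
    have h1 : Tendsto (Fm m) (𝓝 0) (𝓝 0) := by
      have h2 := ((hauxc m).tendsto 0).norm
      rw [haux0 m, norm_zero] at h2
      apply squeeze_zero_norm _ h2
      intro u
      simp only [hFm]
      by_cases hu : 0 < u
      · rw [if_pos hu]
      · rw [if_neg hu]; simp
    have h3 : Fm m 0 = 0 := by rw [hFm]; simp
    rw [ContinuousAt, h3]
    exact h1
  have hFmd : ∀ m, ∀ u : ℝ, u ≠ 0 → HasDerivAt (Fm m) (Fm (m+1) u) u := by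
    intro m u hu
    rcases lt_or_gt_of_ne hu with hneg | hpos
    · have h1 : Fm (m+1) u = 0 := by rw [hFm]; simp [not_lt.2 hneg.le]
      rw [h1]
      apply (hasDerivAt_const u (0:ℂ)).congr_of_eventuallyEq
      filter_upwards [Iio_mem_nhds hneg] with y hy
      simp only [hFm]
      rw [if_neg (not_lt.2 (mem_Iio.1 hy).le)]
    · have hsqpos : 0 < Real.sqrt u := Real.sqrt_pos.2 hpos
      have hsq : HasDerivAt Real.sqrt (1/(2*Real.sqrt u)) u := Real.hasDerivAt_sqrt hu
      have hcomp : HasDerivAt (fun x : ℝ => em m (Real.sqrt x))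
          ((1/(2*Real.sqrt u)) • ((Real.sqrt u : ℂ) * em (m+1) (Real.sqrt u))) u :=
        (hemd m (Real.sqrt u)).scomp u hsq
      have hmain : HasDerivAt (fun x : ℝ => (1/2:ℂ)^m * em m (Real.sqrt x) - deriv^[m] b x)
          ((1/2:ℂ)^m * ((1/(2*Real.sqrt u)) • ((Real.sqrt u : ℂ) * em (m+1) (Real.sqrt u)))
            - deriv^[m+1] b u) u :=
        (hcomp.const_mul _).sub (hbmd m u)
      have hval : (1/2:ℂ)^m * ((1/(2*Real.sqrt u)) • ((Real.sqrt u : ℂ) * em (m+1) (Real.sqrt u)))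
            - deriv^[m+1] b u = Fm (m+1) u := by
        rw [hFm]
        simp only [if_pos hpos]
        congr 1
        rw [Complex.real_smul]
        push_cast
        rw [pow_succ]
        have hsqc : ((Real.sqrt u : ℝ):ℂ) ≠ 0 := Complex.ofReal_ne_zero.2 hsqpos.ne'
        field_simp
      rw [hval] at hmain
      apply hmain.congr_of_eventuallyEq
      filter_upwards [Ioi_mem_nhds hpos] with y hy
      rw [hFm]; simp only [if_pos (mem_Ioi.1 hy)]
  obtain ⟨hFsm, _⟩ := chain_contDiff hFmd hFmc0
  refine ⟨fun u => Fm 0 u + b u, (hFsm 0).add hbC, ?_⟩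
  intro t ht
  show e t = Fm 0 (t^2) + b (t^2)
  have h1 : Fm 0 (t^2) = em 0 (Real.sqrt (t^2)) - b (t^2) := by
    rw [hFm]
    simp only [if_pos (by positivity : (0:ℝ) < t^2)]
    simp
  rw [h1]
  rw [Real.sqrt_sq ht.le, hem0]
  ring

/-- trig polynomials of degree at most m -/
def TS (m : ℕ) : Submodule ℂ (ℝ → ℂ) :=
  Submodule.span ℂ ((fun l : ℤ => (fun s : ℝ => Complex.exp (l * s * Complex.I))) ''
    (Set.Icc (-(m:ℤ)) (m:ℤ)))

lemma TS_mul_e (m : ℕ) (ε : ℤ) (hε : ε = 1 ∨ ε = -1) (f : ℝ → ℂ) (hf : f ∈ TS m) :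
    (fun s : ℝ => Complex.exp (ε * s * Complex.I) * f s) ∈ TS (m+1) := by
  induction hf using Submodule.span_induction with
  | mem g hg =>
    obtain ⟨l, hl, rfl⟩ := hg
    have key : (fun s : ℝ => Complex.exp (ε * s * Complex.I) *
        Complex.exp (l * s * Complex.I))
        = fun s : ℝ => Complex.exp ((l + ε : ℤ) * s * Complex.I) := by
      funext s
      rw [← Complex.exp_add]
      congr 1
      push_cast
      ring
    show (fun s : ℝ => Complex.exp (ε * s * Complex.I) * Complex.exp (l * s * Complex.I))
      ∈ TS (m+1)
    rw [key]
    apply Submodule.subset_span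
    refine ⟨l + ε, ?_, rfl⟩
    simp only [Set.mem_Icc] at hl ⊢
    rcases hε with rfl | rfl <;> push_cast <;> omega
  | zero =>
    have hz : (fun s : ℝ => Complex.exp (ε * s * Complex.I) * (0 : ℝ → ℂ) s) = (0 : ℝ → ℂ) := by
      funext s; simp
    rw [hz]; exact Submodule.zero_mem _
  | add g h _ _ hg' hh' =>
    have heq2 : (fun s : ℝ => Complex.exp (ε * s * Complex.I) * (g + h) s)
        = (fun s : ℝ => Complex.exp (ε * s * Complex.I) * g s)
          + (fun s : ℝ => Complex.exp (ε * s * Complex.I) * h s) := by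
      funext s; simp only [Pi.add_apply]; ring
    rw [heq2]; exact Submodule.add_mem _ hg' hh'
  | smul a g _ hg' =>
    have heq2 : (fun s : ℝ => Complex.exp (ε * s * Complex.I) * (a • g) s)
        = a • (fun s : ℝ => Complex.exp (ε * s * Complex.I) * g s) := by
      funext s; simp only [Pi.smul_apply, smul_eq_mul]; ring
    rw [heq2]; exact Submodule.smul_mem _ a hg'

lemma cos_expand (s : ℝ) : ((Real.cos s : ℝ) : ℂ)
    = (Complex.exp ((1:ℤ) * s * Complex.I) + Complex.exp ((-1:ℤ) * s * Complex.I)) / 2 := by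
  have g1 : ((1:ℤ):ℂ) * s * Complex.I = (s:ℂ) * Complex.I := by push_cast; ring
  have g2 : ((-1:ℤ):ℂ) * s * Complex.I = -(s:ℂ) * Complex.I := by push_cast; ring
  rw [g1, g2]
  have e1 := Complex.exp_mul_I (s : ℂ)
  have e2 := Complex.exp_mul_I (-(s : ℂ))
  rw [Complex.cos_neg, Complex.sin_neg] at e2
  rw [Complex.ofReal_cos]
  simp only [neg_mul] at e2 ⊢
  linear_combination -(e1 + e2) / 2

lemma sin_expand (s : ℝ) : ((Real.sin s : ℝ) : ℂ)
    = (Complex.exp ((1:ℤ) * s * Complex.I) - Complex.exp ((-1:ℤ) * s * Complex.I))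
      / (2 * Complex.I) := by
  have g1 : ((1:ℤ):ℂ) * s * Complex.I = (s:ℂ) * Complex.I := by push_cast; ring
  have g2 : ((-1:ℤ):ℂ) * s * Complex.I = -(s:ℂ) * Complex.I := by push_cast; ring
  rw [g1, g2]
  have e1 := Complex.exp_mul_I (s : ℂ)
  have e2 := Complex.exp_mul_I (-(s : ℂ))
  rw [Complex.cos_neg, Complex.sin_neg] at e2
  rw [Complex.ofReal_sin]
  simp only [neg_mul] at e2 ⊢
  have h2I : (2 : ℂ) * Complex.I ≠ 0 := by simp [Complex.I_ne_zero]
  rw [eq_div_iff h2I]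
  linear_combination e2 - e1

lemma TS_mul_cos (m : ℕ) (f : ℝ → ℂ) (hf : f ∈ TS m) :
    (fun s : ℝ => ((Real.cos s : ℝ) : ℂ) * f s) ∈ TS (m+1) := by
  have h1 := TS_mul_e m 1 (Or.inl rfl) f hf
  have h2 := TS_mul_e m (-1) (Or.inr rfl) f hf
  have key : (fun s : ℝ => ((Real.cos s : ℝ) : ℂ) * f s)
      = (2⁻¹ : ℂ) • (fun s : ℝ => Complex.exp ((1:ℤ) * s * Complex.I) * f s)
        + (2⁻¹ : ℂ) • (fun s : ℝ => Complex.exp ((-1:ℤ) * s * Complex.I) * f s) := by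
    funext s
    simp only [Pi.add_apply, Pi.smul_apply, smul_eq_mul]
    rw [cos_expand s]
    ring
  rw [key]
  exact Submodule.add_mem _ (Submodule.smul_mem _ _ h1) (Submodule.smul_mem _ _ h2)

lemma TS_mul_sin (m : ℕ) (f : ℝ → ℂ) (hf : f ∈ TS m) :
    (fun s : ℝ => ((Real.sin s : ℝ) : ℂ) * f s) ∈ TS (m+1) := by
  have h1 := TS_mul_e m 1 (Or.inl rfl) f hf
  have h2 := TS_mul_e m (-1) (Or.inr rfl) f hf
  have key : (fun s : ℝ => ((Real.sin s : ℝ) : ℂ) * f s)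
      = ((2 * Complex.I)⁻¹ : ℂ) • (fun s : ℝ => Complex.exp ((1:ℤ) * s * Complex.I) * f s)
        - ((2 * Complex.I)⁻¹ : ℂ) • (fun s : ℝ => Complex.exp ((-1:ℤ) * s * Complex.I) * f s) := by
    funext s
    simp only [Pi.sub_apply, Pi.smul_apply, smul_eq_mul]
    rw [sin_expand s]
    have h2I : (2 * Complex.I) ≠ 0 := by
      simp [Complex.I_ne_zero]
    field_simp
  rw [key]
  exact Submodule.sub_mem _ (Submodule.smul_mem _ _ h1) (Submodule.smul_mem _ _ h2)

lemma TS_const (K : ℂ) : (fun _ : ℝ => K) ∈ TS 0 := by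
  have h0 : (fun s : ℝ => Complex.exp ((0:ℤ) * s * Complex.I)) ∈
      ((fun l : ℤ => (fun s : ℝ => Complex.exp (l * s * Complex.I))) ''
        (Set.Icc (-(0:ℤ)) (0:ℤ))) := ⟨0, by simp, rfl⟩
  have h1 : (fun _ : ℝ => K) = K • (fun s : ℝ => Complex.exp ((0:ℤ) * s * Complex.I)) := by
    funext s; simp
  rw [h1]
  exact Submodule.smul_mem _ _ (Submodule.subset_span h0)

lemma TS_mono {m m' : ℕ} (h : m ≤ m') : TS m ≤ TS m' := by
  apply Submodule.span_mono
  apply Set.image_mono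
  intro l hl
  simp only [Set.mem_Icc] at hl ⊢
  omega

lemma TS_trig (j k : ℕ) (K : ℂ) :
    (fun s : ℝ => ((Real.cos s : ℝ) : ℂ)^j * ((Real.sin s : ℝ) : ℂ)^k * K) ∈ TS (j + k) := by
  induction j with
  | zero =>
    induction k with
    | zero => simpa using TS_const K
    | succ k ihk =>
      have h1 := TS_mul_sin _ _ ihk
      have : (fun s : ℝ => ((Real.cos s : ℝ) : ℂ)^0 * ((Real.sin s : ℝ) : ℂ)^(k+1) * K)
          = fun s => ((Real.sin s : ℝ) : ℂ) *
            (((Real.cos s : ℝ) : ℂ)^0 * ((Real.sin s : ℝ) : ℂ)^k * K) := by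
        funext s; ring
      rw [this]
      simpa using h1
  | succ j ihj =>
    have h1 := TS_mul_cos _ _ ihj
    have : (fun s : ℝ => ((Real.cos s : ℝ) : ℂ)^(j+1) * ((Real.sin s : ℝ) : ℂ)^k * K)
        = fun s => ((Real.cos s : ℝ) : ℂ) *
          (((Real.cos s : ℝ) : ℂ)^j * ((Real.sin s : ℝ) : ℂ)^k * K) := by
      funext s; ring
    rw [this]
    have : j + 1 + k = (j + k) + 1 := by omega
    rw [this]
    exact h1

lemma TS_integral_zero (m n : ℕ) (hmn : m < n) (f : ℝ → ℂ) (hf : f ∈ TS m) :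
    (∫ s in (0:ℝ)..(2*Real.pi), f s * Complex.exp (-((n:ℝ) * s) * Complex.I)) = 0 ∧
      IntervalIntegrable (fun s => f s * Complex.exp (-((n:ℝ) * s) * Complex.I))
        MeasureTheory.volume 0 (2*Real.pi) := by
  induction hf using Submodule.span_induction with
  | mem g hg =>
    obtain ⟨l, hl, rfl⟩ := hg
    simp only [Set.mem_Icc] at hl
    have hln : l ≠ (n : ℤ) := by omega
    set c : ℂ := ((l : ℂ) - (n : ℂ)) * Complex.I with hcdef
    have hc : c ≠ 0 := by
      apply mul_ne_zero _ Complex.I_ne_zero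
      intro h
      apply hln
      have : (l : ℂ) = (n : ℂ) := by linear_combination h
      exact_mod_cast this
    have key : (fun s : ℝ => Complex.exp (l * s * Complex.I) *
        Complex.exp (-((n:ℝ) * s) * Complex.I)) = fun s : ℝ => Complex.exp (c * s) := by
      funext s
      rw [← Complex.exp_add]
      congr 1
      rw [hcdef]
      push_cast
      ring
    constructor
    · rw [key, integral_exp_mul_complex hc]
      push_cast
      have h2 : c * (2 * (Real.pi:ℂ)) = ((l - n : ℤ) : ℂ) * (2 * Real.pi * Complex.I) := by
        rw [hcdef]; push_cast; ring
      rw [h2, Complex.exp_int_mul_two_pi_mul_I]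
      simp
    · rw [key]
      exact (Complex.continuous_exp.comp (by continuity)).intervalIntegrable _ _
  | zero =>
    refine ⟨by simp, ?_⟩
    have hz : (fun s : ℝ => (0 : ℝ → ℂ) s * Complex.exp (-((n:ℝ) * s) * Complex.I))
        = fun _ : ℝ => (0:ℂ) := by
      funext s; simp
    rw [hz]
    exact _root_.intervalIntegrable_const
  | add g h _ _ hg' hh' =>
    have heq : (fun s : ℝ => (g + h) s * Complex.exp (-((n:ℝ) * s) * Complex.I))
        = fun s : ℝ => g s * Complex.exp (-((n:ℝ) * s) * Complex.I)
          + h s * Complex.exp (-((n:ℝ) * s) * Complex.I) := by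
      funext s; simp only [Pi.add_apply]; ring
    have hint : IntervalIntegrable
        (fun s : ℝ => (g + h) s * Complex.exp (-((n:ℝ) * s) * Complex.I))
        MeasureTheory.volume 0 (2*Real.pi) := by
      rw [heq]; exact hg'.2.add hh'.2
    constructor
    · rw [heq, intervalIntegral.integral_add hg'.2 hh'.2, hg'.1, hh'.1, add_zero]
    · exact hint
  | smul a g _ hg' =>
    have heq : (fun s : ℝ => (a • g) s * Complex.exp (-((n:ℝ) * s) * Complex.I))
        = fun s : ℝ => a • (g s * Complex.exp (-((n:ℝ) * s) * Complex.I)) := by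
      funext s; simp only [Pi.smul_apply, smul_eq_mul]; ring
    constructor
    · rw [heq, intervalIntegral.integral_smul, hg'.1, smul_zero]
    · rw [heq]; exact hg'.2.smul a

lemma iteratedDeriv_cmul (a : ℂ) (f : ℝ → ℂ) (k : ℕ) :
    iteratedDeriv k (fun x => a * f x) = fun x => a * iteratedDeriv k f x := by
  induction k with
  | zero => simp
  | succ k ih =>
    rw [iteratedDeriv_succ, ih, iteratedDeriv_succ]
    funext x
    exact deriv_const_mul_field a

lemma vanish (H : ℂ → ℂ) (hH : ContDiff ℝ ∞ H) (n : ℕ)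
    (heq : ∀ (s : ℝ) (z : ℂ), H (Complex.exp (s * Complex.I) * z)
      = Complex.exp ((n:ℝ) * s * Complex.I) * H z)
    (m : ℕ) (hm : m < n) :
    iteratedDeriv m (fun t : ℝ => H t) 0 = 0 := by
  set c0 := iteratedDeriv m (fun t : ℝ => H t) 0 with hc0
  set T := iteratedFDeriv ℝ m H 0 with hT
  -- step 1
  have step1 : ∀ s : ℝ, T (fun _ => Complex.exp (s * Complex.I))
      = Complex.exp ((n:ℝ) * s * Complex.I) * c0 := by
    intro s
    set L : ℝ →L[ℝ] ℂ := ContinuousLinearMap.toSpanSingleton ℝ (Complex.exp (s * Complex.I))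
      with hL
    have hcomp : (H ∘ L) = fun t : ℝ => Complex.exp ((n:ℝ) * s * Complex.I) * H t := by
      funext t
      simp only [Function.comp_apply, hL, ContinuousLinearMap.toSpanSingleton_apply]
      rw [Complex.real_smul, mul_comm ((t:ℂ)) _]
      exact heq s t
    have hfd := L.iteratedFDeriv_comp_right hH (0 : ℝ) (i := m) (by exact_mod_cast (le_top : ((m:ℕ∞)) ≤ ⊤))
    have hL0 : L (0:ℝ) = 0 := by simp
    rw [hL0] at hfd
    have happly := congrArg (fun (Φ : ContinuousMultilinearMap ℝ (fun _ : Fin m => ℝ) ℂ) =>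
      Φ (fun _ => (1:ℝ))) hfd
    simp only [ContinuousMultilinearMap.compContinuousLinearMap_apply] at happly
    have hL1 : L (1:ℝ) = Complex.exp (s * Complex.I) := by
      simp [hL, ContinuousLinearMap.toSpanSingleton_apply]
    rw [hL1] at happly
    have hiter : iteratedDeriv m (H ∘ L) 0 = T (fun _ => Complex.exp (s * Complex.I)) := by
      rw [iteratedDeriv_eq_iteratedFDeriv, happly]
    have hiter2 : iteratedDeriv m (H ∘ L) 0 = Complex.exp ((n:ℝ) * s * Complex.I) * c0 := by
      rw [hcomp, iteratedDeriv_cmul]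
    rw [← hiter, hiter2]
  -- step 2 : membership in trig span
  have step2 : (fun s : ℝ => T (fun _ => Complex.exp (s * Complex.I))) ∈ TS m := by
    have hexp : ∀ s : ℝ, (fun _ : Fin m => Complex.exp (s * Complex.I))
        = (fun _ : Fin m => (Real.cos s : ℝ) • (1:ℂ)) + fun _ => (Real.sin s : ℝ) • Complex.I := by
      intro s
      funext i
      simp only [Pi.add_apply]
      rw [Complex.exp_mul_I]
      rw [Complex.real_smul, Complex.real_smul]
      push_cast
      ring
    have hrw : (fun s : ℝ => T (fun _ => Complex.exp (s * Complex.I)))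
        = fun s : ℝ => ∑ S : Finset (Fin m),
            (((Real.cos s : ℝ) : ℂ)^(S.card) * ((Real.sin s : ℝ) : ℂ)^(m - S.card)) •
              T (S.piecewise (fun _ => (1:ℂ)) (fun _ => Complex.I)) := by
      funext s
      rw [hexp s]
      rw [show T ((fun _ : Fin m => (Real.cos s : ℝ) • (1:ℂ))
          + fun _ => (Real.sin s : ℝ) • Complex.I)
        = ∑ S : Finset (Fin m), T (S.piecewise (fun _ => (Real.cos s : ℝ) • (1:ℂ))
            (fun _ => (Real.sin s : ℝ) • Complex.I)) from
        T.toMultilinearMap.map_add_univ _ _]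
      apply Finset.sum_congr rfl
      intro S _
      have hpw : S.piecewise (fun _ : Fin m => (Real.cos s : ℝ) • (1:ℂ))
          (fun _ => (Real.sin s : ℝ) • Complex.I)
          = fun i => (S.piecewise (fun _ => (Real.cos s : ℝ)) (fun _ => (Real.sin s : ℝ)) i) •
              (S.piecewise (fun _ => (1:ℂ)) (fun _ => Complex.I) i) := by
        funext i
        by_cases hi : i ∈ S <;> simp [Finset.piecewise, hi]
      rw [hpw]
      rw [show T (fun i => (S.piecewise (fun _ => (Real.cos s : ℝ)) (fun _ => (Real.sin s : ℝ)) i)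
          • (S.piecewise (fun _ => (1:ℂ)) (fun _ => Complex.I) i))
        = (∏ i, S.piecewise (fun _ => (Real.cos s : ℝ)) (fun _ => (Real.sin s : ℝ)) i) •
            T (S.piecewise (fun _ => (1:ℂ)) (fun _ => Complex.I)) from
        T.toMultilinearMap.map_smul_univ _ _]
      rw [Finset.prod_piecewise]
      simp only [Finset.prod_const, Finset.univ_inter]
      rw [Complex.real_smul]
      congr 1
      push_cast
      rw [Finset.card_sdiff_of_subset (Finset.subset_univ S), Finset.card_univ, Fintype.card_fin]
    rw [hrw]
    have hswap : (fun s : ℝ => ∑ S : Finset (Fin m),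
        (((Real.cos s : ℝ) : ℂ)^(S.card) * ((Real.sin s : ℝ) : ℂ)^(m - S.card)) •
          T (S.piecewise (fun _ => (1:ℂ)) (fun _ => Complex.I)))
        = ∑ S : Finset (Fin m), (fun s : ℝ =>
            (((Real.cos s : ℝ) : ℂ)^(S.card) * ((Real.sin s : ℝ) : ℂ)^(m - S.card)) •
              T (S.piecewise (fun _ => (1:ℂ)) (fun _ => Complex.I))) := by
      funext s
      rw [Finset.sum_apply]
    rw [hswap]
    apply Submodule.sum_mem
    intro S _
    have hcard : S.card + (m - S.card) = m := by
      have := Finset.card_le_card (Finset.subset_univ S)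
      rw [Finset.card_univ, Fintype.card_fin] at this
      omega
    have h1 := TS_trig S.card (m - S.card)
      (T (S.piecewise (fun _ => (1:ℂ)) (fun _ => Complex.I)))
    rw [hcard] at h1
    have h2 : (fun s : ℝ => ((Real.cos s : ℝ) : ℂ)^(S.card) * ((Real.sin s : ℝ) : ℂ)^(m - S.card)
        * (T (S.piecewise (fun _ => (1:ℂ)) (fun _ => Complex.I))))
        = fun s : ℝ => (((Real.cos s : ℝ) : ℂ)^(S.card) * ((Real.sin s : ℝ) : ℂ)^(m - S.card)) •
            T (S.piecewise (fun _ => (1:ℂ)) (fun _ => Complex.I)) := by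
      funext s; rw [smul_eq_mul]
    rw [← h2]
    exact h1
  -- step 3 : integrate
  have step3 : (fun s : ℝ => Complex.exp ((n:ℝ) * s * Complex.I) * c0) ∈ TS m := by
    have : (fun s : ℝ => Complex.exp ((n:ℝ) * s * Complex.I) * c0)
        = fun s : ℝ => T (fun _ => Complex.exp (s * Complex.I)) := by
      funext s; rw [step1 s]
    rw [this]; exact step2
  obtain ⟨hint, _⟩ := TS_integral_zero m n hm _ step3
  have hsimp : (fun s : ℝ => (Complex.exp ((n:ℝ) * s * Complex.I) * c0)
      * Complex.exp (-((n:ℝ) * s) * Complex.I)) = fun _ : ℝ => c0 := by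
    funext s
    rw [mul_comm _ c0, mul_assoc, ← Complex.exp_add]
    conv_rhs => rw [← mul_one c0, ← Complex.exp_zero]
    congr 1
    congr 1
    push_cast
    ring
  rw [hsimp] at hint
  rw [intervalIntegral.integral_const] at hint
  have h2pi : (2 * Real.pi - 0) ≠ 0 := by
    have := Real.two_pi_pos; intro h; rw [sub_zero] at h; linarith
  rcases smul_eq_zero.1 hint with h | h
  · exact absurd h h2pi
  · exact h

lemma div_pow_of_jets (n : ℕ) (c : ℝ → ℂ) (hc : ContDiff ℝ ∞ c)
    (hjet : ∀ m, m < n → iteratedDeriv m c 0 = 0) :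
    ∃ e : ℝ → ℂ, ContDiff ℝ ∞ e ∧ ∀ t : ℝ, c t = (t:ℂ)^n * e t := by
  induction n generalizing c with
  | zero => exact ⟨c, hc, fun t => by simp⟩
  | succ n ih =>
    have h0 : c 0 = 0 := by
      have := hjet 0 (Nat.succ_pos n)
      simpa using this
    obtain ⟨g, hg, hgt, hgjet⟩ := hadamard c hc h0
    obtain ⟨e, he, het⟩ := ih g hg (fun m hm => by
      rw [hgjet m, hjet (m+1) (by omega)]
      simp)
    refine ⟨e, he, fun t => ?_⟩
    rw [hgt t, het t, pow_succ]
    ring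

lemma core (H : ℂ → ℂ) (hH : ContDiff ℝ ∞ H) (n : ℕ)
    (heq : ∀ (s : ℝ) (z : ℂ), H (Complex.exp (s * Complex.I) * z)
      = Complex.exp ((n:ℝ) * s * Complex.I) * H z) :
    ∃ ψ : ℝ → ℂ, ContDiff ℝ ∞ ψ ∧ ∀ t : ℝ, 0 < t → H t = (t:ℂ)^n * ψ (t^2) := by
  set c : ℝ → ℂ := fun t : ℝ => H t with hcdef
  have hcC : ContDiff ℝ ∞ c := hH.comp_continuousLinearMap (g := Complex.ofRealCLM)
  have hjet : ∀ m, m < n → iteratedDeriv m c 0 = 0 := fun m hm => vanish H hH n heq m hm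
  have hpar : ∀ t : ℝ, c (-t) = (-1:ℂ)^n * c t := by
    intro t
    have h1 := heq Real.pi (t : ℂ)
    rw [Complex.exp_pi_mul_I] at h1
    have h2 : Complex.exp ((n:ℝ) * Real.pi * Complex.I) = (-1:ℂ)^n := by
      rw [show ((n:ℝ) : ℂ) * Real.pi * Complex.I = n * (Real.pi * Complex.I) by push_cast; ring,
        Complex.exp_nat_mul, Complex.exp_pi_mul_I]
    rw [h2] at h1
    have h3 : ((-t : ℝ) : ℂ) = -1 * (t : ℂ) := by push_cast; ring
    rw [hcdef]
    simp only []
    rw [h3, h1]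
  obtain ⟨e, heC, het⟩ := div_pow_of_jets n c hcC hjet
  have hev : ∀ t : ℝ, e (-t) = e t := by
    intro t
    rcases eq_or_ne t 0 with rfl | ht
    · rw [neg_zero]
    · have h1 := het t
      have h2 := het (-t)
      rw [hpar t, h1] at h2
      push_cast at h2
      have h3 : ((-1:ℂ))^n * ((t:ℂ)^n * e t) = (-(t:ℂ))^n * e t := by ring
      rw [h3] at h2
      have h4 : ((-(t:ℂ)))^n ≠ 0 := pow_ne_zero _ (by
        simp only [neg_ne_zero]
        exact Complex.ofReal_ne_zero.2 ht)
      exact (mul_left_cancel₀ h4 h2.symm)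
  obtain ⟨ψ, hψC, hψt⟩ := even_to_sq e heC hev
  refine ⟨ψ, hψC, fun t ht => ?_⟩
  rw [show H (t:ℂ) = c t from rfl, het t, hψt t ht]

end OV

/-- The 4×4 block-diagonal matrix `diag(R(θ₁), R(θ₂))` built out of 2×2
rotation matrices. -/
noncomputable def blockRot4 (θ₁ θ₂ : ℝ) : Matrix (Fin 4) (Fin 4) ℝ :=
  !![Real.cos θ₁, -Real.sin θ₁, 0, 0;
     Real.sin θ₁, Real.cos θ₁, 0, 0;
     0, 0, Real.cos θ₂, -Real.sin θ₂;
     0, 0, Real.sin θ₂, Real.cos θ₂]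

theorem order_of_vanishing_of_slice_module_products
    (a d : ℕ) (ha : 0 < a) (hd : 0 < d) (hdvd : a ∣ d)
    (G : ℂ → Matrix (Fin 4) (Fin 4) ℝ)
    (hsmooth : ∀ i j : Fin 4, ContDiffOn ℝ (⊤ : ℕ∞) (fun z => G z i j) {0}ᶜ)
    (hsymm : ∀ z : ℂ, z ≠ 0 → (G z).IsSymm)
    (hequiv : ∀ (θ : ℝ) (z : ℂ), z ≠ 0 →
      G (Complex.exp ((a * θ : ℝ) * Complex.I) * z) =
        blockRot4 (a * θ) (d * θ) * G z * (blockRot4 (a * θ) (d * θ))ᵀ)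
    (h11 : ∀ t : ℝ, 0 < t → G (t : ℂ) 0 0 = 1)
    (h22 : ∀ t : ℝ, 0 < t → G (t : ℂ) 1 1 = 1)
    (h12 : ∀ t : ℝ, 0 < t → G (t : ℂ) 0 1 = 0)
    (h13 : ∀ t : ℝ, 0 < t → G (t : ℂ) 0 2 = 0)
    (h14 : ∀ t : ℝ, 0 < t → G (t : ℂ) 0 3 = 0)
    (hext : ∃ Ge : ℂ → Matrix (Fin 4) (Fin 4) ℝ,
        (∀ i j : Fin 4, ContDiff ℝ (⊤ : ℕ∞) fun z => Ge z i j) ∧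
        ∀ z : ℂ, z ≠ 0 → Ge z = G z) :
    ∃ φ₁ φ₂ : ℝ → ℝ,
      ContDiff ℝ (⊤ : ℕ∞) φ₁ ∧ ContDiff ℝ (⊤ : ℕ∞) φ₂ ∧
      ∀ t : ℝ, 0 < t →
        G (t : ℂ) 1 2 = t ^ (d / a + 1) * φ₁ (t ^ 2) ∧
        G (t : ℂ) 1 3 = t ^ (d / a + 1) * φ₂ (t ^ 2) := by
  obtain ⟨Ge, hGeC, hGeEq⟩ := hext
  set q : ℕ := d / a with hqdef
  have hq : d = a * q := (Nat.div_mul_cancel hdvd).symm.trans (mul_comm _ _)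
  set n : ℕ := q + 1 with hndef
  have ha' : (a:ℝ) ≠ 0 := Nat.cast_ne_zero.2 ha.ne'
  -- the complex combination
  set H : ℂ → ℂ := fun z =>
    ((Ge z 0 2 - Ge z 1 3 : ℝ) : ℂ) + ((Ge z 0 3 + Ge z 1 2 : ℝ) : ℂ) * Complex.I with hHdef
  have hHC : ContDiff ℝ ∞ H := by
    have h1 : ∀ i j : Fin 4, ContDiff ℝ ∞ fun z => Ge z i j := fun i j => hGeC i j
    exact ((Complex.ofRealCLM.contDiff).comp ((h1 0 2).sub (h1 1 3))).add
      (((Complex.ofRealCLM.contDiff).comp ((h1 0 3).add (h1 1 2))).mul contDiff_const)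
  -- equivariance for z ≠ 0
  have heqne : ∀ (s : ℝ) (z : ℂ), z ≠ 0 → H (Complex.exp (s * Complex.I) * z)
      = Complex.exp ((n:ℝ) * s * Complex.I) * H z := by
    intro s z hz
    have h1 : (a:ℝ) * (s / a) = s := by field_simp
    have h2 : (d:ℝ) * (s / a) = (q:ℝ) * s := by
      rw [hq]; push_cast; field_simp
    have hB := hequiv (s / a) z hz
    rw [h1, h2] at hB
    have hzz : Complex.exp (s * Complex.I) * z ≠ 0 :=
      mul_ne_zero (Complex.exp_ne_zero _) hz
    set cs := Real.cos s
    set ss := Real.sin s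
    set cw := Real.cos ((q:ℝ) * s)
    set sw := Real.sin ((q:ℝ) * s)
    set M : Matrix (Fin 4) (Fin 4) ℝ := G z with hM
    have e02 : G (Complex.exp (s * Complex.I) * z) 0 2
        = cs * (M 0 2 * cw - M 0 3 * sw) - ss * (M 1 2 * cw - M 1 3 * sw) := by
      rw [hB]
      simp only [Matrix.mul_apply, Matrix.transpose_apply, Fin.sum_univ_four, blockRot4]
      simp [Matrix.vecHead, Matrix.vecTail]
      ring
    have e03 : G (Complex.exp (s * Complex.I) * z) 0 3
        = cs * (M 0 2 * sw + M 0 3 * cw) - ss * (M 1 2 * sw + M 1 3 * cw) := by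
      rw [hB]
      simp only [Matrix.mul_apply, Matrix.transpose_apply, Fin.sum_univ_four, blockRot4]
      simp [Matrix.vecHead, Matrix.vecTail]
      ring
    have e12 : G (Complex.exp (s * Complex.I) * z) 1 2
        = ss * (M 0 2 * cw - M 0 3 * sw) + cs * (M 1 2 * cw - M 1 3 * sw) := by
      rw [hB]
      simp only [Matrix.mul_apply, Matrix.transpose_apply, Fin.sum_univ_four, blockRot4]
      simp [Matrix.vecHead, Matrix.vecTail]
      ring
    have e13 : G (Complex.exp (s * Complex.I) * z) 1 3
        = ss * (M 0 2 * sw + M 0 3 * cw) + cs * (M 1 2 * sw + M 1 3 * cw) := by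
      rw [hB]
      simp only [Matrix.mul_apply, Matrix.transpose_apply, Fin.sum_univ_four, blockRot4]
      simp [Matrix.vecHead, Matrix.vecTail]
      ring
    have hexpn : Complex.exp ((n:ℝ) * s * Complex.I)
        = ((cw : ℝ) + (sw : ℝ) * Complex.I) * ((cs : ℝ) + (ss : ℝ) * Complex.I) := by
      have hnsplit : ((n:ℝ) : ℂ) * s * Complex.I
          = ((q:ℝ) * s : ℝ) * Complex.I + (s : ℂ) * Complex.I := by
        push_cast [hndef]
        ring
      rw [hnsplit, Complex.exp_add, Complex.exp_mul_I, Complex.exp_mul_I]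
      rw [← Complex.ofReal_cos, ← Complex.ofReal_sin, ← Complex.ofReal_cos, ← Complex.ofReal_sin]
    rw [hHdef]
    simp only []
    rw [hGeEq _ hzz, hGeEq _ hz, e02, e03, e12, e13, hexpn]
    rw [← hM]
    rw [Complex.ext_iff]
    constructor
    · simp only [Complex.add_re, Complex.mul_re, Complex.ofReal_re, Complex.ofReal_im,
        Complex.I_re, Complex.I_im, Complex.add_im, Complex.mul_im, Complex.sub_re,
        Complex.sub_im]
      push_cast
      ring
    · simp only [Complex.add_re, Complex.mul_re, Complex.ofReal_re, Complex.ofReal_im,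
        Complex.I_re, Complex.I_im, Complex.add_im, Complex.mul_im, Complex.sub_re,
        Complex.sub_im]
      push_cast
      ring
  -- H 0 = 0
  have hn0 : (n:ℝ) ≠ 0 := Nat.cast_ne_zero.2 (Nat.succ_ne_zero q)
  have hH0 : H 0 = 0 := by
    set s₀ : ℝ := Real.pi / n with hs₀
    have hns₀ : Complex.exp ((n:ℝ) * s₀ * Complex.I) = -1 := by
      have hqc : ((q:ℂ)+1) ≠ 0 := Nat.cast_add_one_ne_zero q
      rw [show ((n:ℝ) : ℂ) * s₀ * Complex.I = ((Real.pi : ℝ) : ℂ) * Complex.I by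
        rw [hs₀]; push_cast; field_simp; exact div_self (by exact_mod_cast hn0)]
      exact Complex.exp_pi_mul_I
    have hcont : Filter.Tendsto (fun t : ℝ => H (Complex.exp (s₀ * Complex.I) * t))
        (nhdsWithin 0 (Set.Ioi 0)) (nhds (H 0)) := by
      have h1 : Continuous fun t : ℝ => H (Complex.exp (s₀ * Complex.I) * t) :=
        hHC.continuous.comp (continuous_const.mul Complex.continuous_ofReal)
      have h2 := h1.tendsto 0
      simp only [Complex.ofReal_zero, mul_zero] at h2
      exact h2.mono_left nhdsWithin_le_nhds
    have hcont2 : Filter.Tendsto (fun t : ℝ => H (Complex.exp (s₀ * Complex.I) * t))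
        (nhdsWithin 0 (Set.Ioi 0)) (nhds (-H 0)) := by
      have h1 : Continuous fun t : ℝ => -H (t : ℂ) :=
        (hHC.continuous.comp Complex.continuous_ofReal).neg
      have h2 := h1.tendsto 0
      simp only [Complex.ofReal_zero] at h2
      have h3 := h2.mono_left (nhdsWithin_le_nhds (s := Set.Ioi (0:ℝ)))
      apply Filter.Tendsto.congr' _ h3
      filter_upwards [self_mem_nhdsWithin] with t ht
      have htne : (t : ℂ) ≠ 0 := Complex.ofReal_ne_zero.2 (ne_of_gt ht)
      rw [heqne s₀ t htne, hns₀]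
      ring
    have := tendsto_nhds_unique hcont hcont2
    have h4 : (2:ℂ) * H 0 = 0 := by linear_combination this
    exact (mul_eq_zero.1 h4).resolve_left two_ne_zero
  have heqall : ∀ (s : ℝ) (z : ℂ), H (Complex.exp (s * Complex.I) * z)
      = Complex.exp ((n:ℝ) * s * Complex.I) * H z := by
    intro s z
    rcases eq_or_ne z 0 with rfl | hz
    · rw [mul_zero, hH0, mul_zero]
    · exact heqne s z hz
  obtain ⟨ψ, hψC, hψt⟩ := OV.core H hHC n heqall
  refine ⟨fun u => (ψ u).im, fun u => -(ψ u).re, ?_, ?_, ?_⟩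
  · exact (Complex.imCLM.contDiff).comp hψC
  · exact ((Complex.reCLM.contDiff).comp hψC).neg
  · intro t ht
    have htne : (t : ℂ) ≠ 0 := Complex.ofReal_ne_zero.2 (ne_of_gt ht)
    have hHt : H t = ((-(G (t:ℂ) 1 3) : ℝ) : ℂ) + ((G (t:ℂ) 1 2 : ℝ) : ℂ) * Complex.I := by
      rw [hHdef]
      simp only []
      rw [hGeEq _ htne, h13 t ht, h14 t ht]
      push_cast
      ring
    have hco := hψt t ht
    rw [hHt] at hco
    have hpow : ((t:ℂ))^n = ((t^n : ℝ) : ℂ) := by push_cast; ring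
    rw [hpow] at hco
    have hre := congrArg Complex.re hco
    have him := congrArg Complex.im hco
    simp only [Complex.add_re, Complex.ofReal_re, Complex.mul_re, Complex.ofReal_im,
      Complex.I_re, Complex.I_im, Complex.add_im, Complex.mul_im] at hre him
    constructor
    · show G (t:ℂ) 1 2 = t ^ n * (ψ (t^2)).im
      linarith [him]
    · show G (t:ℂ) 1 3 = t ^ n * (-(ψ (t^2)).re)
      linarith [hre]

end
end
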